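/- arXiv:1702.05578 — 4 statements merged into one kernel-verified Lean document; each statement's English description precedes it below -/
import Mathlib

section
/- (Redundant Set Characterization) In the counter BPA system Δ₀, for any process α with Var(α) ⊆ B: α is a valid encoding of the n-bit binary number b_n b_{n-1} … b_1 if and only if Rd(α) = { Z_1^{b_1}, Z_2^{b_2}, …, Z_n^{b_n} }. -/
/-- Silent-step closure (⇒): reflexive transitive closure of τ-transitions. -/
def SilentStar {S A : Type*} (trans : S → A → S → Prop) (tau : A) : S → S → Prop :=
  Relation.ReflTransGen (fun p q => trans p tau q)

/-- A symmetric relation is a branching bisimulation. -/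
def IsBranchingBisim {S A : Type*} (trans : S → A → S → Prop) (tau : A)
    (R : S → S → Prop) : Prop :=
  Symmetric R ∧
  ∀ a b a' (l : A), R a b → trans a l a' →
    (l = tau ∧ R a' b) ∨
    ∃ b'' b', SilentStar trans tau b b'' ∧ trans b'' l b' ∧ R a b'' ∧ R a' b'

/-- A symmetric relation is a weak bisimulation. -/
def IsWeakBisim {S A : Type*} (trans : S → A → S → Prop) (tau : A)
    (R : S → S → Prop) : Prop :=
  Symmetric R ∧
  ∀ a b a' (l : A), R a b → trans a l a' →
    (l = tau ∧ R a' b) ∨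
    ∃ g1 g2 b', SilentStar trans tau b g1 ∧ trans g1 l g2 ∧
      SilentStar trans tau g2 b' ∧ R a' b'

/-- Branching bisimilarity: the union of all branching bisimulations. -/
def BrBisim {S A : Type*} (trans : S → A → S → Prop) (tau : A) (a b : S) : Prop :=
  ∃ R, IsBranchingBisim trans tau R ∧ R a b

/-- Weak bisimilarity: the union of all weak bisimulations. -/
def WkBisim {S A : Type*} (trans : S → A → S → Prop) (tau : A) (a b : S) : Prop :=
  ∃ R, IsWeakBisim trans tau R ∧ R a b

/-- One-step transition of a BPA system: X β →λ α β whenever X →λ α is a rule. -/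
def BPA.Trans {V A : Type*} (rules : V → A → List V → Prop)
    (p : List V) (l : A) (q : List V) : Prop :=
  ∃ X α β, p = X :: β ∧ rules X l α ∧ q = α ++ β

/-- A step by some action. -/
def BPA.Step {V A : Type*} (rules : V → A → List V → Prop) (p q : List V) : Prop :=
  ∃ l, BPA.Trans rules p l q

/-- Reachability in a BPA system. -/
def BPA.Reach {V A : Type*} (rules : V → A → List V → Prop) : List V → List V → Prop :=
  Relation.ReflTransGen (BPA.Step rules)

/-- A BPA system is normed if every variable can reach the empty process ε. -/
def BPA.Normed {V A : Type*} (rules : V → A → List V → Prop) : Prop :=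
  ∀ X : V, BPA.Reach rules [X] []

/-- The redundant set Rd(α) = { X | Xα ≃ α }. -/
def BPA.Rd {V A : Type*} (rules : V → A → List V → Prop) (tau : A) (α : List V) : Set V :=
  {X | BrBisim (BPA.Trans rules) tau (X :: α) α}

/-- Variables of the counter system Δ₀. -/
inductive CVar (n : ℕ) : Type
  | B (i : Fin n) (b : Bool)
  | Z (i : Fin n) (b : Bool)
  | BP (i : Fin n) (b : Bool) (j : Fin n) (b' : Bool)
  deriving DecidableEq

/-- Actions of the counter system Δ₀. -/
inductive CAct (n : ℕ) : Type
  | tau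
  | d
  | a (i : Fin n) (b : Bool)
  deriving DecidableEq

/-- The rules of the counter system Δ₀. -/
inductive CRule {n : ℕ} : CVar n → CAct n → List (CVar n) → Prop
  | z_a (i : Fin n) (b : Bool) : CRule (.Z i b) (.a i b) []
  | z_tau (i : Fin n) (b : Bool) : CRule (.Z i b) .tau []
  | b_self (i : Fin n) (b : Bool) : CRule (.B i b) (.a i b) [.B i b]
  | b_d (i : Fin n) (b : Bool) : CRule (.B i b) .d []
  | b_obs (i : Fin n) (b : Bool) (j : Fin n) (b' : Bool) :
      j ≠ i → CRule (.B i b) (.a j b') [.BP i b j b']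
  | bp_self (i : Fin n) (b : Bool) (j : Fin n) (b' : Bool) :
      j ≠ i → CRule (.BP i b j b') (.a i b) [.BP i b j b']
  | bp_d (i : Fin n) (b : Bool) (j : Fin n) (b' : Bool) :
      j ≠ i → CRule (.BP i b j b') .d [.Z j b']
  | bp_obs (i : Fin n) (b : Bool) (j : Fin n) (b' : Bool) (j' : Fin n) (b'' : Bool) :
      j ≠ i → j' ≠ i → CRule (.BP i b j b') (.a j' b'') [.BP i b j' b'']

/-- Branching bisimilarity on processes of Δ₀. -/
def CBisim {n : ℕ} (p q : List (CVar n)) : Prop :=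
  BrBisim (BPA.Trans (@CRule n)) CAct.tau p q

/-- Weak bisimilarity on processes of Δ₀. -/
def CWeak {n : ℕ} (p q : List (CVar n)) : Prop :=
  WkBisim (BPA.Trans (@CRule n)) CAct.tau p q

/-- α is a valid encoding of the n-bit binary number with i-th bit `bits i`. -/
def ValidEnc {n : ℕ} (α : List (CVar n)) (bits : Fin n → Bool) : Prop :=
  (∀ X ∈ α, ∃ i b, X = CVar.B i b) ∧
  ∀ i : Fin n, ∃ α₁ α₂ : List (CVar n),
    α = α₁ ++ CVar.B i (bits i) :: α₂ ∧ CVar.B i (!(bits i)) ∉ α₁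


namespace CounterAux

variable {n : ℕ}

abbrev Tr (p : List (CVar n)) (l : CAct n) (q : List (CVar n)) : Prop :=
  BPA.Trans (@CRule n) p l q

def allB (α : List (CVar n)) : Prop := ∀ X ∈ α, ∃ i b, X = CVar.B i b

def red (α : List (CVar n)) (k : Fin n) (b : Bool) : Prop :=
  ∃ β₁ β₂, α = β₁ ++ CVar.B k b :: β₂ ∧ ∀ c, CVar.B k c ∉ β₁

lemma tr_cons {X : CVar n} {β q : List (CVar n)} {l : CAct n} :
    Tr (X :: β) l q ↔ ∃ rhs, CRule X l rhs ∧ q = rhs ++ β := by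
  constructor
  · rintro ⟨Y, a, γ, heq, hr, rfl⟩
    injection heq with h1 h2
    subst h1; subst h2
    exact ⟨a, hr, rfl⟩
  · rintro ⟨rhs, hr, rfl⟩
    exact ⟨X, rhs, β, rfl, hr, rfl⟩

lemma tr_nil {q : List (CVar n)} {l : CAct n} : ¬ Tr [] l q := by
  rintro ⟨Y, a, γ, heq, hr, rfl⟩
  simp at heq

lemma tau_head {p q : List (CVar n)} (h : Tr p CAct.tau q) :
    ∃ i b β, p = CVar.Z i b :: β := by
  obtain ⟨X, a, β, rfl, hr, rfl⟩ := h
  cases hr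
  exact ⟨_, _, _, rfl⟩

lemma silent_eq {p q : List (CVar n)}
    (hp : ∀ i b β, p ≠ CVar.Z i b :: β)
    (h : SilentStar (BPA.Trans (@CRule n)) CAct.tau p q) : q = p := by
  rcases (Relation.ReflTransGen.cases_head h) with rfl | ⟨c, hc, _⟩
  · rfl
  · obtain ⟨i, b, β, rfl⟩ := tau_head hc
    exact absurd rfl (hp i b β)

lemma allB_no_Z {α : List (CVar n)} (h : allB α) (i : Fin n) (b : Bool)
    (β : List (CVar n)) : α ≠ CVar.Z i b :: β := by
  rintro rfl
  obtain ⟨_, _, h⟩ := h (CVar.Z i b) (by simp)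
  simp at h

/-- the "d-norm": number of non-Z symbols -/
def dn (α : List (CVar n)) : ℕ :=
  α.countP (fun X => match X with | CVar.Z _ _ => false | _ => true)

lemma dn_cons (X : CVar n) (α : List (CVar n)) :
    dn (X :: α) = dn α + (if (match X with | CVar.Z _ _ => false | _ => true) then 1 else 0) := by
  simp [dn, List.countP_cons]

lemma dn_trans {γ γ' : List (CVar n)} {l : CAct n} (h : Tr γ l γ') :
    dn γ = dn γ' + (if l = CAct.d then 1 else 0) := by
  obtain ⟨X, a, β, rfl, hr, rfl⟩ := h
  cases hr <;> simp [dn, List.countP_cons]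

lemma dn_silent {γ γ' : List (CVar n)}
    (h : SilentStar (BPA.Trans (@CRule n)) CAct.tau γ γ') : dn γ = dn γ' := by
  induction h with
  | refl => rfl
  | tail _ hstep ih =>
      have := dn_trans hstep
      simp at this
      omega

def live (γ : List (CVar n)) : Prop :=
  ∀ i b j b', CVar.BP i b j b' ∈ γ → j ≠ i

lemma dn_le {R : List (CVar n) → List (CVar n) → Prop}
    (hR : IsBranchingBisim (BPA.Trans (@CRule n)) CAct.tau R) :
    ∀ γ δ, live γ → R γ δ → dn γ ≤ dn δ := by
  suffices h : ∀ m l (γ δ : List (CVar n)), dn γ ≤ m → γ.length ≤ l → live γ → R γ δ →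
      dn γ ≤ dn δ by
    intro γ δ hlv hγδ; exact h (dn γ) γ.length γ δ le_rfl le_rfl hlv hγδ
  intro m
  induction m with
  | zero => intro l γ δ h _ _ _; omega
  | succ m ihm =>
    intro l
    induction l with
    | zero =>
      intro γ δ _ hlen _ _
      have : γ = [] := by
        cases γ with
        | nil => rfl
        | cons a as => simp at hlen
      subst this
      simp [dn]
    | succ l ihl =>
      intro γ δ hdn hlen hlv hRγδ
      match γ with
      | [] => simp [dn]
      | CVar.Z i b :: γ₁ =>
        have hlv1 : live γ₁ := fun i b j b' hm => hlv i b j b' (by simp [hm])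
        have hstep : Tr (CVar.Z i b :: γ₁) CAct.tau γ₁ :=
          tr_cons.2 ⟨[], CRule.z_tau i b, by simp⟩
        rcases hR.2 _ _ _ _ hRγδ hstep with ⟨_, h2⟩ | ⟨δ'', δ', hs, ht, _, h2⟩
        · have h1 : dn (CVar.Z i b :: γ₁) = dn γ₁ := by simp [dn_cons]
          rw [h1] at hdn ⊢
          exact ihl γ₁ δ (by omega) (by simp at hlen; omega) hlv1 h2
        · have h1 : dn (CVar.Z i b :: γ₁) = dn γ₁ := by simp [dn_cons]
          have h3 := dn_silent hs
          have h4 := dn_trans ht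
          simp at h4
          rw [h1] at hdn ⊢
          have := ihl γ₁ δ' (by omega) (by simp at hlen; omega) hlv1 h2
          omega
      | CVar.B i b :: γ₁ =>
        have hlv1 : live γ₁ := fun i b j b' hm => hlv i b j b' (by simp [hm])
        have hstep : Tr (CVar.B i b :: γ₁) CAct.d γ₁ :=
          tr_cons.2 ⟨[], CRule.b_d i b, by simp⟩
        rcases hR.2 _ _ _ _ hRγδ hstep with ⟨h1, _⟩ | ⟨δ'', δ', hs, ht, _, h2⟩
        · simp at h1
        · have h1 : dn (CVar.B i b :: γ₁) = dn γ₁ + 1 := by simp [dn_cons]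
          have h3 := dn_silent hs
          have h4 := dn_trans ht
          simp at h4
          rw [h1] at hdn ⊢
          have := ihm γ₁.length γ₁ δ' (by omega) le_rfl hlv1 h2
          omega
      | CVar.BP i b j b' :: γ₁ =>
        have hji : j ≠ i := hlv i b j b' (by simp)
        have hlv1 : live (CVar.Z j b' :: γ₁) := by
          intro i2 b2 j2 b2' hm
          simp at hm
          exact hlv i2 b2 j2 b2' (by simp [hm])
        have hstep : Tr (CVar.BP i b j b' :: γ₁) CAct.d (CVar.Z j b' :: γ₁) :=
          tr_cons.2 ⟨[CVar.Z j b'], CRule.bp_d i b j b' hji, by simp⟩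
        rcases hR.2 _ _ _ _ hRγδ hstep with ⟨h1, _⟩ | ⟨δ'', δ', hs, ht, _, h2⟩
        · simp at h1
        · have h1 : dn (CVar.BP i b j b' :: γ₁) = dn (CVar.Z j b' :: γ₁) + 1 := by
            simp [dn_cons]
          have h3 := dn_silent hs
          have h4 := dn_trans ht
          simp at h4
          rw [h1] at hdn ⊢
          have := ihm (CVar.Z j b' :: γ₁).length (CVar.Z j b' :: γ₁) δ' (by omega) le_rfl hlv1 h2
          omega


lemma allB_live {α : List (CVar n)} (h : allB α) : live α := by
  intro i b j b' hm
  obtain ⟨_, _, heq⟩ := h _ hm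
  simp at heq

lemma red_of_valid {k : Fin n} {b : Bool} :
    ∀ α : List (CVar n),
      (∃ α₁ α₂, α = α₁ ++ CVar.B k b :: α₂ ∧ CVar.B k (!b) ∉ α₁) → red α k b := by
  intro α
  induction α with
  | nil => rintro ⟨α₁, α₂, h, _⟩; cases α₁ <;> simp at h
  | cons x rest ih =>
    rintro ⟨α₁, α₂, h, hmem⟩
    cases α₁ with
    | nil =>
      simp only [List.nil_append, List.cons.injEq] at h
      exact ⟨[], α₂, by simp [h.1, h.2], by simp⟩
    | cons y α₁' =>
      simp only [List.cons_append, List.cons.injEq] at h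
      obtain ⟨rfl, h2⟩ := h
      by_cases hx : ∃ c, x = CVar.B k c
      · obtain ⟨c, rfl⟩ := hx
        have hc : c = b := by
          have hne : CVar.B k c ≠ CVar.B k (!b) := fun h => hmem (h ▸ List.mem_cons_self)
          cases b <;> cases c <;> simp_all
        exact ⟨[], α₁' ++ CVar.B k b :: α₂, by simp [hc, h2], by simp⟩
      · obtain ⟨β₁, β₂, heq, hβ⟩ :=
          ih ⟨α₁', α₂, h2, fun hm => hmem (List.mem_cons_of_mem _ hm)⟩
        refine ⟨x :: β₁, β₂, by simp [heq], ?_⟩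
        intro c hc
        rcases List.mem_cons.1 hc with h | h
        · exact hx ⟨c, h.symm⟩
        · exact hβ c h

lemma red_uniq {k : Fin n} :
    ∀ {α : List (CVar n)} {b b' : Bool}, red α k b → red α k b' → b = b' := by
  intro α
  induction α with
  | nil => rintro b b' ⟨β₁, β₂, h, _⟩ _; cases β₁ <;> simp at h
  | cons x rest ih =>
    rintro b b' ⟨β₁, β₂, h1, e1⟩ ⟨γ₁, γ₂, h2, e2⟩
    cases β₁ with
    | nil =>
      cases γ₁ with
      | nil =>
        simp only [List.nil_append, List.cons.injEq] at h1 h2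
        rw [h1.1] at h2
        injection h2.1.symm with _ hb
        exact hb.symm
      | cons z γ' =>
        simp only [List.nil_append, List.cons_append, List.cons.injEq] at h1 h2
        have hz : z = CVar.B k b := by rw [← h2.1, h1.1]
        exact absurd (List.mem_cons.2 (Or.inl hz.symm)) (e2 b)
    | cons y β' =>
      cases γ₁ with
      | nil =>
        simp only [List.nil_append, List.cons_append, List.cons.injEq] at h1 h2
        have hy : y = CVar.B k b' := by rw [← h1.1, h2.1]
        exact absurd (List.mem_cons.2 (Or.inl hy.symm)) (e1 b')
      | cons z γ' =>
        simp only [List.cons_append, List.cons.injEq] at h1 h2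
        exact ih ⟨β', β₂, h1.2, fun c hm => e1 c (List.mem_cons_of_mem _ hm)⟩
          ⟨γ', γ₂, h2.2, fun c hm => e2 c (List.mem_cons_of_mem _ hm)⟩

lemma red_cons {j k : Fin n} {c b : Bool} {rest : List (CVar n)}
    (hjk : j ≠ k) (h : red rest k b) : red (CVar.B j c :: rest) k b := by
  obtain ⟨β₁, β₂, rfl, e⟩ := h
  refine ⟨CVar.B j c :: β₁, β₂, by simp, ?_⟩
  intro c' hc
  rcases List.mem_cons.1 hc with h | h
  · injection h with hk
    exact hjk hk.symm
  · exact e c' h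

lemma bp_no_tau {i : Fin n} {b : Bool} {j : Fin n} {b' : Bool} {tail : List (CVar n)}
    (x : Fin n) (y : Bool) (β : List (CVar n)) :
    CVar.BP i b j b' :: tail ≠ CVar.Z x y :: β := by simp

lemma neg_Z {k : Fin n} {b : Bool} :
    ∀ α : List (CVar n), allB α → ¬ red α k b →
    ∀ R, IsBranchingBisim (BPA.Trans (@CRule n)) CAct.tau R →
    ¬ R (CVar.Z k b :: α) α := by
  suffices h : ∀ m, ∀ α : List (CVar n), α.length ≤ m → allB α → ¬ red α k b →
      ∀ R, IsBranchingBisim (BPA.Trans (@CRule n)) CAct.tau R →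
      ¬ R (CVar.Z k b :: α) α by
    intro α; exact h α.length α le_rfl
  intro m
  induction m with
  | zero =>
    intro α hlen hB hnr R hR hRel
    have hα : α = [] := by cases α with
      | nil => rfl
      | cons a as => simp at hlen
    subst hα
    have hstep : Tr (CVar.Z k b :: ([] : List (CVar n))) (CAct.a k b) [] :=
      tr_cons.2 ⟨[], CRule.z_a k b, by simp⟩
    rcases hR.2 _ _ _ _ hRel hstep with ⟨h1, _⟩ | ⟨δ'', δ', hs, ht, _, _⟩
    · simp at h1
    · have hδ : δ'' = [] := silent_eq (by simp) hs
      subst hδ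
      exact tr_nil ht
  | succ m ihm =>
    intro α hlen hB hnr R hR hRel
    have hstep : Tr (CVar.Z k b :: α) (CAct.a k b) α :=
      tr_cons.2 ⟨[], CRule.z_a k b, by simp⟩
    rcases hR.2 _ _ _ _ hRel hstep with ⟨h1, _⟩ | ⟨δ'', δ', hs, ht, _, hR2⟩
    · simp at h1
    · have hδ : δ'' = α := silent_eq (allB_no_Z hB) hs
      subst hδ
      obtain ⟨X, rhs, tail, rfl, hr, rfl⟩ := ht
      obtain ⟨j, c, rfl⟩ := hB X (List.mem_cons_self)
      cases hr with
      | b_self => exact hnr ⟨[], tail, rfl, by simp⟩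
      | b_obs _ _ _ _ hne =>
        -- here the move is b_obs, target is BP j c k b :: tail, with k ≠ j
        have hd : Tr (CVar.B j c :: tail) CAct.d tail :=
          tr_cons.2 ⟨[], CRule.b_d j c, by simp⟩
        rcases hR.2 _ _ _ _ hR2 hd with ⟨h1, _⟩ | ⟨g1, g2, hs2, ht2, _, hR3⟩
        · simp at h1
        · have hg1 : g1 = CVar.BP j c k b :: tail := by
            refine silent_eq ?_ hs2
            intro x y β
            simp
          subst hg1
          obtain ⟨rhs2, hr2, rfl⟩ := tr_cons.1 ht2
          cases hr2 with
          | bp_d =>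
            have hR4 : R (CVar.Z k b :: tail) tail := hR.1 hR3
            have hBt : allB tail := fun X hm => hB X (List.mem_cons_of_mem _ hm)
            have hnrt : ¬ red tail k b := fun hrt => hnr (red_cons (Ne.symm hne) hrt)
            exact ihm tail (by simp at hlen; omega) hBt hnrt R hR hR4

inductive PR : List (CVar n) → List (CVar n) → Prop
  | refl (γ) : PR γ γ
  | zl (k : Fin n) (b : Bool) (β) : allB β → red β k b → PR (CVar.Z k b :: β) β
  | zr (k : Fin n) (b : Bool) (β) : allB β → red β k b → PR β (CVar.Z k b :: β)
  | bpl (j : Fin n) (c : Bool) (k : Fin n) (b : Bool) (γ) : allB γ → red γ k b → k ≠ j →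
      PR (CVar.B j c :: γ) (CVar.BP j c k b :: γ)
  | bpr (j : Fin n) (c : Bool) (k : Fin n) (b : Bool) (γ) : allB γ → red γ k b → k ≠ j →
      PR (CVar.BP j c k b :: γ) (CVar.B j c :: γ)

lemma PR_symm : Symmetric (@PR n) := by
  intro x y h
  cases h with
  | refl γ => exact .refl _
  | zl k b β h1 h2 => exact .zr k b y h1 h2
  | zr k b β h1 h2 => exact .zl k b x h1 h2
  | bpl j c k b γ h1 h2 h3 => exact .bpr j c k b γ h1 h2 h3
  | bpr j c k b γ h1 h2 h3 => exact .bpl j c k b γ h1 h2 h3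

lemma PR_bisim : IsBranchingBisim (BPA.Trans (@CRule n)) CAct.tau (@PR n) := by
  refine ⟨PR_symm, ?_⟩
  intro a bb a' l hab ht
  cases hab with
  | refl γ =>
    exact Or.inr ⟨_, a', Relation.ReflTransGen.refl, ht, .refl _, .refl a'⟩
  | zl k b β hB hred =>
    obtain ⟨rhs, hr, rfl⟩ := tr_cons.1 ht
    cases hr with
    | z_tau => exact Or.inl ⟨rfl, .refl _⟩
    | z_a =>
      obtain ⟨β₁, β₂, rfl, hnm⟩ := hred
      cases β₁ with
      | nil =>
        have hstep : Tr ([] ++ CVar.B k b :: β₂) (CAct.a k b) ([] ++ CVar.B k b :: β₂) :=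
          tr_cons.2 ⟨[CVar.B k b], CRule.b_self k b, by simp⟩
        exact Or.inr ⟨_, _, Relation.ReflTransGen.refl, hstep,
          .zl k b _ hB ⟨[], β₂, rfl, hnm⟩, .refl _⟩
      | cons y β₁' =>
        obtain ⟨j, c, rfl⟩ := hB y (List.mem_cons_self)
        have hkj : k ≠ j := by
          intro h
          exact hnm c (h ▸ List.mem_cons_self)
        have hBt : allB (β₁' ++ CVar.B k b :: β₂) :=
          fun X hm => hB X (List.mem_cons_of_mem _ hm)
        have hredt : red (β₁' ++ CVar.B k b :: β₂) k b :=
          ⟨β₁', β₂, rfl, fun c' hm => hnm c' (List.mem_cons_of_mem _ hm)⟩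
        have hstep : Tr (CVar.B j c :: (β₁' ++ CVar.B k b :: β₂)) (CAct.a k b)
            (CVar.BP j c k b :: (β₁' ++ CVar.B k b :: β₂)) :=
          tr_cons.2 ⟨[CVar.BP j c k b], CRule.b_obs j c k b hkj, by simp⟩
        exact Or.inr ⟨_, _, Relation.ReflTransGen.refl, hstep,
          .zl k b _ hB ⟨CVar.B j c :: β₁', β₂, rfl, hnm⟩,
          .bpl j c k b _ hBt hredt hkj⟩
  | zr k b β hB hred =>
    have htau : Tr (CVar.Z k b :: a) CAct.tau a :=
      tr_cons.2 ⟨[], CRule.z_tau k b, by simp⟩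
    exact Or.inr ⟨a, a', Relation.ReflTransGen.single htau, ht, .refl a, .refl a'⟩
  | bpl j c k b γ hB hred hkj =>
    obtain ⟨rhs, hr, rfl⟩ := tr_cons.1 ht
    cases hr with
    | b_self =>
      have hstep : Tr (CVar.BP j c k b :: γ) (CAct.a j c) (CVar.BP j c k b :: γ) :=
        tr_cons.2 ⟨[CVar.BP j c k b], CRule.bp_self j c k b hkj, by simp⟩
      exact Or.inr ⟨_, _, Relation.ReflTransGen.refl, hstep,
        .bpl j c k b γ hB hred hkj, .bpl j c k b γ hB hred hkj⟩
    | b_d =>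
      have hstep : Tr (CVar.BP j c k b :: γ) CAct.d (CVar.Z k b :: γ) :=
        tr_cons.2 ⟨[CVar.Z k b], CRule.bp_d j c k b hkj, by simp⟩
      exact Or.inr ⟨_, _, Relation.ReflTransGen.refl, hstep,
        .bpl j c k b γ hB hred hkj, .zr k b γ hB hred⟩
    | b_obs _ _ j' b'' hj' =>
      have hstep : Tr (CVar.BP j c k b :: γ) (CAct.a j' b'')
          (CVar.BP j c j' b'' :: γ) :=
        tr_cons.2 ⟨[CVar.BP j c j' b''], CRule.bp_obs j c k b j' b'' hkj hj', by simp⟩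
      exact Or.inr ⟨_, _, Relation.ReflTransGen.refl, hstep,
        .bpl j c k b γ hB hred hkj, .refl _⟩
  | bpr j c k b γ hB hred hkj =>
    obtain ⟨rhs, hr, rfl⟩ := tr_cons.1 ht
    cases hr with
    | bp_self =>
      have hstep : Tr (CVar.B j c :: γ) (CAct.a j c) (CVar.B j c :: γ) :=
        tr_cons.2 ⟨[CVar.B j c], CRule.b_self j c, by simp⟩
      exact Or.inr ⟨_, _, Relation.ReflTransGen.refl, hstep,
        .bpr j c k b γ hB hred hkj, .bpr j c k b γ hB hred hkj⟩
    | bp_d =>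
      have hstep : Tr (CVar.B j c :: γ) CAct.d γ :=
        tr_cons.2 ⟨[], CRule.b_d j c, by simp⟩
      exact Or.inr ⟨_, _, Relation.ReflTransGen.refl, hstep,
        .bpr j c k b γ hB hred hkj, .zl k b γ hB hred⟩
    | bp_obs _ _ _ _ j' b'' _ hj' =>
      have hstep : Tr (CVar.B j c :: γ) (CAct.a j' b'') (CVar.BP j c j' b'' :: γ) :=
        tr_cons.2 ⟨[CVar.BP j c j' b''], CRule.b_obs j c j' b'' hj', by simp⟩
      exact Or.inr ⟨_, _, Relation.ReflTransGen.refl, hstep,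
        .bpr j c k b γ hB hred hkj, .refl _⟩

lemma pos_Z {k : Fin n} {b : Bool} {α : List (CVar n)} (hB : allB α) (hred : red α k b) :
    BrBisim (BPA.Trans (@CRule n)) CAct.tau (CVar.Z k b :: α) α :=
  ⟨PR, PR_bisim, .zl k b α hB hred⟩

end CounterAux

/-- Redundant Set Characterization: α validly encodes b_n…b_1 iff
Rd(α) = { Z_1^{b_1}, …, Z_n^{b_n} }. -/
theorem counter_rd_characterization {n : ℕ} (α : List (CVar n))
    (hα : ∀ X ∈ α, ∃ i b, X = CVar.B i b) (bits : Fin n → Bool) :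
    ValidEnc α bits ↔
      BPA.Rd (@CRule n) CAct.tau α = {X | ∃ i : Fin n, X = CVar.Z i (bits i)} := by
  have hB : CounterAux.allB α := hα
  constructor
  · rintro ⟨-, hv⟩
    ext X
    constructor
    · intro hbr
      have hbr' : BrBisim (BPA.Trans (@CRule n)) CAct.tau (X :: α) α := hbr
      obtain ⟨R, hR, hRel⟩ := hbr'
      show ∃ i : Fin n, X = CVar.Z i (bits i)
      cases X with
      | Z i c =>
        refine ⟨i, ?_⟩
        have h1 : CounterAux.red α i (bits i) := CounterAux.red_of_valid α (hv i)
        have h2 : CounterAux.red α i c := by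
          by_contra h
          exact CounterAux.neg_Z α hB h R hR hRel
        rw [CounterAux.red_uniq h2 h1]
      | B i c =>
        exfalso
        have hlv : CounterAux.live (CVar.B i c :: α) := by
          intro i2 b2 j2 b2' hm
          rcases List.mem_cons.1 hm with h | h
          · simp at h
          · obtain ⟨_, _, heq⟩ := hB _ h
            simp at heq
        have hle := CounterAux.dn_le hR _ _ hlv hRel
        rw [CounterAux.dn_cons] at hle
        simp at hle
      | BP i c j c' =>
        exfalso
        by_cases hji : j ≠ i
        · have hlv : CounterAux.live (CVar.BP i c j c' :: α) := by
            intro i2 b2 j2 b2' hm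
            rcases List.mem_cons.1 hm with h | h
            · injection h with h1 h2 h3 h4
              subst h1; subst h3
              exact hji
            · obtain ⟨_, _, heq⟩ := hB _ h
              simp at heq
          have hle := CounterAux.dn_le hR _ _ hlv hRel
          rw [CounterAux.dn_cons] at hle
          simp at hle
        · push_neg at hji
          subst hji
          obtain ⟨α₁, α₂, hdec, -⟩ := hv j
          have hne : α ≠ [] := by rw [hdec]; simp
          obtain ⟨Y, tail, rfl⟩ := List.exists_cons_of_ne_nil hne
          obtain ⟨p, q, rfl⟩ := hB Y (List.mem_cons_self)
          have hd : CounterAux.Tr (CVar.B p q :: tail) CAct.d tail :=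
            CounterAux.tr_cons.2 ⟨[], CRule.b_d p q, by simp⟩
          rcases hR.2 _ _ _ _ (hR.1 hRel) hd with ⟨h1, _⟩ | ⟨g1, g2, hs, ht, _, _⟩
          · simp at h1
          · have hg : g1 = CVar.BP j c j c' :: (CVar.B p q :: tail) :=
              CounterAux.silent_eq (by intro x y β; simp) hs
            subst hg
            obtain ⟨rhs, hr, -⟩ := CounterAux.tr_cons.1 ht
            cases hr with
            | bp_d _ _ _ _ h => exact h rfl
    · intro hmem
      obtain ⟨i, rfl⟩ : ∃ i : Fin n, X = CVar.Z i (bits i) := hmem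
      show BrBisim (BPA.Trans (@CRule n)) CAct.tau (CVar.Z i (bits i) :: α) α
      exact CounterAux.pos_Z hB (CounterAux.red_of_valid α (hv i))
  · intro hset
    refine ⟨hα, ?_⟩
    intro i
    have hmem : BrBisim (BPA.Trans (@CRule n)) CAct.tau (CVar.Z i (bits i) :: α) α := by
      have h1 : CVar.Z i (bits i) ∈ BPA.Rd (@CRule n) CAct.tau α := by
        rw [hset]
        exact ⟨i, rfl⟩
      exact h1
    obtain ⟨R, hR, hRel⟩ := hmem
    by_cases h : CounterAux.red α i (bits i)
    · obtain ⟨β₁, β₂, rfl, hnm⟩ := h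
      exact ⟨β₁, β₂, rfl, hnm _⟩
    · exact absurd hRel (CounterAux.neg_Z α hB h R hR)
end

section
/- In the counter BPA system Δ₀, if α is a valid encoding of b_n…b_1 and β is a process with Var(β) ⊆ { Z_1^0, Z_1^1, …, Z_n^0, Z_n^1 }, then βα ≃ α if and only if Var(β) ⊆ { Z_1^{b_1}, …, Z_n^{b_n} }; and likewise βα ≈ α if and only if Var(β) ⊆ { Z_1^{b_1}, …, Z_n^{b_n} }. -/
/-! ### Auxiliary development -/

namespace CounterAux

open CVar CAct

variable {n : ℕ}

abbrev T : List (CVar n) → CAct n → List (CVar n) → Prop := BPA.Trans (@CRule n)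

/-- identity (index and bit) of a non-Z variable -/
def hid : CVar n → Option (Fin n × Bool)
  | .B j b => some (j, b)
  | .BP j b _ _ => some (j, b)
  | .Z _ _ => none

/-- the first occurrence of index i (among B/BP identities) has bit c -/
def FB : List (CVar n) → Fin n → Bool → Prop
  | [], _, _ => False
  | X :: ρ, i, c => hid X = some (i, c) ∨ ((∀ b, hid X ≠ some (i, b)) ∧ FB ρ i c)

def NB (l : List (CVar n)) : Prop := ∀ X ∈ l, ∃ j b, X = CVar.B j b
def ZL (l : List (CVar n)) : Prop := ∀ X ∈ l, ∃ i c, X = CVar.Z i c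
def ZOK (δ β : List (CVar n)) : Prop := ∀ i c, CVar.Z i c ∈ β → FB δ i c
def HOK (X : CVar n) (ρ : List (CVar n)) : Prop :=
  (∃ j b, X = CVar.B j b) ∨ (∃ j b i c, X = CVar.BP j b i c ∧ i ≠ j ∧ FB ρ i c)

def Cc (δ γ : List (CVar n)) : Prop :=
  (δ = γ ∧ NB δ) ∨
  ∃ X Y ρ, δ = X :: ρ ∧ γ = Y :: ρ ∧ NB ρ ∧ hid X = hid Y ∧ HOK X ρ ∧ HOK Y ρ

def S (p q : List (CVar n)) : Prop :=
  ∃ β β' δ γ, p = β ++ δ ∧ q = β' ++ γ ∧ ZL β ∧ ZL β' ∧ ZOK δ β ∧ ZOK γ β' ∧ Cc δ γ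

def R (p q : List (CVar n)) : Prop := p = q ∨ S p q

lemma trans_inv {X : CVar n} {ρ q l} (h : T (X :: ρ) l q) :
    ∃ w, CRule X l w ∧ q = w ++ ρ := by
  obtain ⟨X', w, β, hp, hr, hq⟩ := h
  obtain ⟨rfl, rfl⟩ : X' = X ∧ β = ρ := by
    constructor <;> [exact (List.cons.injEq .. ▸ hp).1.symm; exact (List.cons.injEq .. ▸ hp).2.symm]
  exact ⟨w, hr, hq⟩

lemma trans_nil {q : List (CVar n)} {l} : ¬ T [] l q := by
  rintro ⟨X, w, β, h, -, -⟩; exact nomatch h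

lemma trans_mk {X : CVar n} {w l} (ρ : List (CVar n)) (h : CRule X l w) :
    T (X :: ρ) l (w ++ ρ) := ⟨X, w, ρ, rfl, h, rfl⟩

lemma tau_inv {p q : List (CVar n)} (h : T p CAct.tau q) : ∃ i c, p = CVar.Z i c :: q := by
  obtain ⟨X, w, β, rfl, hr, rfl⟩ := h
  cases hr with
  | z_tau i b => exact ⟨i, b, rfl⟩

lemma strip (β : List (CVar n)) (γ : List (CVar n)) (h : ZL β) :
    SilentStar (@T n) CAct.tau (β ++ γ) γ := by
  induction β with
  | nil => exact Relation.ReflTransGen.refl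
  | cons X βt ih =>
    obtain ⟨i, c, rfl⟩ := h X (List.mem_cons_self ..)
    refine Relation.ReflTransGen.head ?_ (ih fun Y hY => h Y (List.mem_cons_of_mem _ hY))
    exact ⟨_, [], βt ++ γ, rfl, CRule.z_tau i c, rfl⟩

lemma nz_no_tau {p q : List (CVar n)} (hp : ∀ i c, (CVar.Z i c : CVar n) ∉ p) :
    ¬ T p CAct.tau q := by
  intro h
  obtain ⟨i, c, rfl⟩ := tau_inv h
  exact hp i c (List.mem_cons_self ..)

lemma nb_no_Z {p : List (CVar n)} (hp : NB p) : ∀ i c, (CVar.Z i c : CVar n) ∉ p := by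
  intro i c hm
  obtain ⟨j, b, h⟩ := hp _ hm
  exact nomatch h

lemma silent_eq_of_no_tau {p p' : List (CVar n)}
    (hp : ∀ i c, (CVar.Z i c : CVar n) ∉ p)
    (hs : SilentStar (@T n) CAct.tau p p') : p' = p := by
  rcases Relation.ReflTransGen.cases_head hs with h | ⟨b, hb, -⟩
  · exact h.symm
  · exact absurd hb (nz_no_tau hp)


@[simp] lemma FB_nil {i : Fin n} {c} : ¬ FB ([] : List (CVar n)) i c := fun h => h

lemma FB_cons {X : CVar n} {ρ i c} :
    FB (X :: ρ) i c ↔ hid X = some (i, c) ∨ ((∀ b, hid X ≠ some (i, b)) ∧ FB ρ i c) :=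
  Iff.rfl

lemma fb_aux (i : Fin n) (c : Bool) :
    ∀ α₁ α₂ : List (CVar n), (∀ X ∈ α₁, ∃ j b, X = CVar.B j b) →
      CVar.B i (!c) ∉ α₁ → FB (α₁ ++ CVar.B i c :: α₂) i c := by
  intro α₁
  induction α₁ with
  | nil => intro α₂ _ _; exact Or.inl rfl
  | cons Y α₁' ih =>
    intro α₂ hB hni
    obtain ⟨j, b, rfl⟩ := hB _ (List.mem_cons_self ..)
    by_cases hj : j = i
    · subst hj
      by_cases hb : b = c
      · subst hb; exact Or.inl rfl
      · exfalso
        have : b = !c := by cases b <;> cases c <;> simp_all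
        exact hni (this ▸ List.mem_cons_self ..)
    · refine Or.inr ⟨?_, ih α₂ (fun X hX => hB X (List.mem_cons_of_mem _ hX))
        (fun hm => hni (List.mem_cons_of_mem _ hm))⟩
      intro b' h
      exact hj (by simpa [hid] using congrArg (Option.map Prod.fst) h)

lemma fb_of_valid {α : List (CVar n)} {bits : Fin n → Bool} (hα : ValidEnc α bits)
    (i : Fin n) : FB α i (bits i) := by
  obtain ⟨α₁, α₂, rfl, hni⟩ := hα.2 i
  exact fb_aux i (bits i) α₁ α₂ (fun X hX => hα.1 X (by simp [hX])) hni

/-- transition by self-loop for an HOK head -/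
lemma hok_self {X : CVar n} {ρ j b} (hX : HOK X ρ) (hh : hid X = some (j, b)) :
    T (X :: ρ) (CAct.a j b) (X :: ρ) := by
  rcases hX with ⟨j', b', rfl⟩ | ⟨j', b', i', c', rfl, hne, -⟩
  · obtain ⟨rfl, rfl⟩ : j' = j ∧ b' = b := by simpa [hid] using hh
    exact trans_mk ρ (CRule.b_self _ _)
  · obtain ⟨rfl, rfl⟩ : j' = j ∧ b' = b := by simpa [hid] using hh
    exact trans_mk ρ (CRule.bp_self _ _ _ _ hne)

/-- transition observing another index for an HOK head -/
lemma hok_obs {X : CVar n} {ρ j b} (i : Fin n) (c : Bool) (hX : HOK X ρ)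
    (hh : hid X = some (j, b)) (hij : i ≠ j) :
    T (X :: ρ) (CAct.a i c) (CVar.BP j b i c :: ρ) := by
  rcases hX with ⟨j', b', rfl⟩ | ⟨j', b', i', c', rfl, hne, -⟩
  · obtain ⟨rfl, rfl⟩ : j' = j ∧ b' = b := by simpa [hid] using hh
    exact trans_mk ρ (CRule.b_obs _ _ _ _ hij)
  · obtain ⟨rfl, rfl⟩ : j' = j ∧ b' = b := by simpa [hid] using hh
    exact trans_mk ρ (CRule.bp_obs _ _ _ _ _ _ hne hij)

lemma hid_ne_of_ne {j i : Fin n} {b : Bool} (h : ∀ b', (some (j, b) : Option (Fin n × Bool)) ≠ some (i, b')) :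
    j ≠ i := fun hji => h b (by rw [hji])


lemma hok_hid {X : CVar n} {ρ} (h : HOK X ρ) : ∃ j b, hid X = some (j, b) := by
  rcases h with ⟨j, b, rfl⟩ | ⟨j, b, i, c, rfl, -, -⟩ <;> exact ⟨j, b, rfl⟩

lemma ZL_nil : ZL ([] : List (CVar n)) := fun X h => absurd h (by simp)
lemma ZOK_nil {γ : List (CVar n)} : ZOK γ [] := fun i c h => absurd h (by simp)
lemma ZL_single {i : Fin n} {c} : ZL [CVar.Z i c] := fun X h => ⟨i, c, by simpa using h⟩
lemma ZOK_single {ρ : List (CVar n)} {i c} (h : FB ρ i c) : ZOK ρ [CVar.Z i c] := by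
  intro i' c' h'
  obtain ⟨rfl, rfl⟩ : i' = i ∧ c' = c := by simpa [CVar.Z.injEq] using h'
  exact h

lemma ZL_tail {X : CVar n} {β} (h : ZL (X :: β)) : ZL β :=
  fun Y hY => h Y (List.mem_cons_of_mem _ hY)
lemma ZOK_tail {δ : List (CVar n)} {X β} (h : ZOK δ (X :: β)) : ZOK δ β :=
  fun i c hm => h i c (List.mem_cons_of_mem _ hm)
lemma NB_tail {X : CVar n} {ρ} (h : NB (X :: ρ)) : NB ρ :=
  fun Y hY => h Y (List.mem_cons_of_mem _ hY)

lemma S_symm : ∀ {p q : List (CVar n)}, S p q → S q p := by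
  rintro p q ⟨β, β', δ, γ, rfl, rfl, h1, h2, h3, h4, h5⟩
  refine ⟨β', β, γ, δ, rfl, rfl, h2, h1, h4, h3, ?_⟩
  rcases h5 with ⟨rfl, hnb⟩ | ⟨X, Y, ρ, rfl, rfl, hρ, hh, hX, hY⟩
  · exact Or.inl ⟨rfl, hnb⟩
  · exact Or.inr ⟨Y, X, ρ, rfl, rfl, hρ, hh.symm, hY, hX⟩

lemma R_symm : Symmetric (@R n) := by
  rintro p q (rfl | h)
  · exact Or.inl rfl
  · exact Or.inr (S_symm h)

lemma R_bisim : IsBranchingBisim (@T n) CAct.tau (@R n) := by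
  refine ⟨R_symm, ?_⟩
  rintro p q p' l (rfl | ⟨β, β', δ, γ, rfl, rfl, hZβ, hZβ', hOδ, hOγ, hC⟩) ht
  · exact Or.inr ⟨p, p', Relation.ReflTransGen.refl, ht, Or.inl rfl, Or.inl rfl⟩
  cases β with
  | nil =>
    simp only [List.nil_append] at ht
    rcases hC with ⟨rfl, hnb⟩ | ⟨X, Y, ρ, rfl, rfl, hρ, hhid, hX, hY⟩
    · -- equal cores: respond with the identical transition
      exact Or.inr ⟨δ, p', strip β' δ hZβ', ht, Or.inl rfl, Or.inl rfl⟩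
    · obtain ⟨w, hr, rfl⟩ := trans_inv ht
      obtain ⟨j, b, hhX⟩ := hok_hid hX
      have hhY : hid Y = some (j, b) := hhid ▸ hhX
      have hS : S ((X :: ρ) : List (CVar n)) (Y :: ρ) :=
        ⟨[], [], X :: ρ, Y :: ρ, rfl, rfl, ZL_nil, ZL_nil, ZOK_nil, ZOK_nil,
          Or.inr ⟨X, Y, ρ, rfl, rfl, hρ, hhid, hX, hY⟩⟩
      rcases hX with ⟨j', b', hXB⟩ | ⟨j', b', i0, c0, hXBP, hne0, hFB0⟩
      · subst hXB
        obtain ⟨rfl, rfl⟩ : j' = j ∧ b' = b := by simpa [hid] using hhX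
        cases hr with
        | b_self =>
          exact Or.inr ⟨Y :: ρ, Y :: ρ, strip β' _ hZβ', hok_self hY hhY,
            Or.inr hS, Or.inr hS⟩
        | b_d =>
          rcases hY with ⟨j2, b2, hYB⟩ | ⟨j2, b2, i2, c2, hYBP, hne2, hFB2⟩
          · subst hYB
            exact Or.inr ⟨_ :: ρ, ρ, strip β' _ hZβ', trans_mk ρ (CRule.b_d _ _),
              Or.inr hS, Or.inl rfl⟩
          · subst hYBP
            refine Or.inr ⟨_ :: ρ, CVar.Z i2 c2 :: ρ, strip β' _ hZβ',
              trans_mk ρ (CRule.bp_d _ _ _ _ hne2), Or.inr hS, Or.inr ?_⟩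
            exact ⟨[], [CVar.Z i2 c2], ρ, ρ, rfl, rfl, ZL_nil, ZL_single, ZOK_nil,
              ZOK_single hFB2, Or.inl ⟨rfl, hρ⟩⟩
        | b_obs _ _ j2 b2 hj2 =>
          exact Or.inr ⟨Y :: ρ, _, strip β' _ hZβ', hok_obs _ _ hY hhY hj2,
            Or.inr hS, Or.inl rfl⟩
      · subst hXBP
        obtain ⟨rfl, rfl⟩ : j' = j ∧ b' = b := by simpa [hid] using hhX
        cases hr with
        | bp_self =>
          exact Or.inr ⟨Y :: ρ, Y :: ρ, strip β' _ hZβ', hok_self hY hhY,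
            Or.inr hS, Or.inr hS⟩
        | bp_d =>
          rcases hY with ⟨j2, b2, hYB⟩ | ⟨j2, b2, i2, c2, hYBP, hne2, hFB2⟩
          · subst hYB
            refine Or.inr ⟨_ :: ρ, ρ, strip β' _ hZβ', trans_mk ρ (CRule.b_d _ _),
              Or.inr hS, Or.inr ?_⟩
            exact ⟨[CVar.Z i0 c0], [], ρ, ρ, rfl, rfl, ZL_single, ZL_nil,
              ZOK_single hFB0, ZOK_nil, Or.inl ⟨rfl, hρ⟩⟩
          · subst hYBP
            refine Or.inr ⟨_ :: ρ, CVar.Z i2 c2 :: ρ, strip β' _ hZβ',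
              trans_mk ρ (CRule.bp_d _ _ _ _ hne2), Or.inr hS, Or.inr ?_⟩
            exact ⟨[CVar.Z i0 c0], [CVar.Z i2 c2], ρ, ρ, rfl, rfl, ZL_single, ZL_single,
              ZOK_single hFB0, ZOK_single hFB2, Or.inl ⟨rfl, hρ⟩⟩
        | bp_obs _ _ _ _ j2 b2 _ hj2 =>
          exact Or.inr ⟨Y :: ρ, _, strip β' _ hZβ', hok_obs _ _ hY hhY hj2,
            Or.inr hS, Or.inl rfl⟩
  | cons Xz βt =>
    obtain ⟨i, c, rfl⟩ := hZβ _ (List.mem_cons_self ..)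
    obtain ⟨w, hr, rfl⟩ := trans_inv ht
    have hSfull : S ((CVar.Z i c :: βt) ++ δ) γ :=
      ⟨CVar.Z i c :: βt, [], δ, γ, rfl, rfl, hZβ, ZL_nil, hOδ, ZOK_nil, hC⟩
    cases hr with
    | z_tau =>
      exact Or.inl ⟨rfl, Or.inr ⟨βt, β', δ, γ, rfl, rfl, ZL_tail hZβ, hZβ',
        ZOK_tail hOδ, hOγ, hC⟩⟩
    | z_a =>
      have hFB : FB δ i c := hOδ i c (List.mem_cons_self ..)
      rcases hC with ⟨rfl, hnb⟩ | ⟨X, Y, ρ, rfl, rfl, hρ, hhid, hX, hY⟩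
      · -- δ = γ, all B's
        cases δ with
        | nil => exact absurd hFB FB_nil
        | cons H ρ =>
          obtain ⟨j, b, rfl⟩ := hnb H (List.mem_cons_self ..)
          have hHOK : HOK (CVar.B j b) ρ := Or.inl ⟨j, b, rfl⟩
          rcases hFB with h1 | ⟨h2, hFBρ⟩
          · obtain ⟨rfl, rfl⟩ : j = i ∧ b = c := by simpa [hid] using h1
            refine Or.inr ⟨_, _, strip β' _ hZβ', hok_self hHOK rfl,
              Or.inr hSfull, Or.inr ?_⟩
            exact ⟨βt, [], _, _, rfl, rfl, ZL_tail hZβ, ZL_nil, ZOK_tail hOδ, ZOK_nil,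
              Or.inl ⟨rfl, hnb⟩⟩
          · have hji : j ≠ i := hid_ne_of_ne h2
            refine Or.inr ⟨_, _, strip β' _ hZβ', hok_obs i c hHOK rfl hji.symm,
              Or.inr hSfull, Or.inr ?_⟩
            exact ⟨βt, [], _, _, rfl, rfl, ZL_tail hZβ, ZL_nil, ZOK_tail hOδ, ZOK_nil,
              Or.inr ⟨CVar.B j b, CVar.BP j b i c, ρ, rfl, rfl, NB_tail hnb, rfl,
                hHOK, Or.inr ⟨j, b, i, c, rfl, hji.symm, hFBρ⟩⟩⟩
      · obtain ⟨j, b, hhX⟩ := hok_hid hX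
        have hhY : hid Y = some (j, b) := hhid ▸ hhX
        rcases hFB with h1 | ⟨h2, hFBρ⟩
        · obtain ⟨rfl, rfl⟩ : j = i ∧ b = c := by
            have := hhX.symm.trans h1
            simpa using this
          refine Or.inr ⟨_, _, strip β' _ hZβ', hok_self hY hhY,
            Or.inr hSfull, Or.inr ?_⟩
          exact ⟨βt, [], _, _, rfl, rfl, ZL_tail hZβ, ZL_nil, ZOK_tail hOδ, ZOK_nil,
            Or.inr ⟨X, Y, ρ, rfl, rfl, hρ, hhid, hX, hY⟩⟩
        · have hji : j ≠ i := by
            intro hji; exact (h2 b) (by rw [hhX, hji])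
          refine Or.inr ⟨_, _, strip β' _ hZβ', hok_obs i c hY hhY hji.symm,
            Or.inr hSfull, Or.inr ?_⟩
          exact ⟨βt, [], _, _, rfl, rfl, ZL_tail hZβ, ZL_nil, ZOK_tail hOδ, ZOK_nil,
            Or.inr ⟨X, CVar.BP j b i c, ρ, rfl, rfl, hρ, by rw [hhX]; rfl,
              hX, Or.inr ⟨j, b, i, c, rfl, hji.symm, hFBρ⟩⟩⟩


lemma br_to_wk {St A : Type*} {t : St → A → St → Prop} {tau : A} {R : St → St → Prop}
    (h : IsBranchingBisim t tau R) : IsWeakBisim t tau R := by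
  refine ⟨h.1, fun a b a' l hR ht => ?_⟩
  rcases h.2 a b a' l hR ht with h1 | ⟨b'', b', hs, htr, _, h2⟩
  · exact Or.inl h1
  · exact Or.inr ⟨b'', b', b', hs, htr, Relation.ReflTransGen.refl, h2⟩

lemma wk_silent {R : List (CVar n) → List (CVar n) → Prop}
    (hR : IsWeakBisim (@T n) CAct.tau R) {p q p'} (h : R p q)
    (hs : SilentStar (@T n) CAct.tau p p') :
    ∃ q', SilentStar (@T n) CAct.tau q q' ∧ R p' q' := by
  induction hs with
  | refl => exact ⟨q, Relation.ReflTransGen.refl, h⟩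
  | tail hmid hstep ih =>
    obtain ⟨q', hq', hrel⟩ := ih
    rcases hR.2 _ _ _ _ hrel hstep with ⟨-, h2⟩ | ⟨g1, g2, b', s1, tr, s2, h2⟩
    · exact ⟨q', hq', h2⟩
    · exact ⟨b', hq'.trans (s1.trans ((Relation.ReflTransGen.single tr).trans s2)), h2⟩

lemma silent_zl {t α g : List (CVar n)} (ht : ZL t) (hα : NB α)
    (hs : SilentStar (@T n) CAct.tau (t ++ α) g) : ∃ t₂, g = t₂ ++ α ∧ ZL t₂ := by
  induction hs with
  | refl => exact ⟨t, rfl, ht⟩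
  | tail hmid hstep ih =>
    obtain ⟨t₂, rfl, ht₂⟩ := ih
    obtain ⟨i, c, heq⟩ := tau_inv hstep
    cases t₂ with
    | nil =>
      exfalso
      exact nb_no_Z hα i c (by rw [List.nil_append] at heq; rw [heq]; exact List.mem_cons_self ..)
    | cons w t₃ =>
      injection heq with h1 h2
      exact ⟨t₃, h2.symm, ZL_tail ht₂⟩

lemma no_Z_of_head {H : CVar n} {ρ} (hH : ∀ i c, H ≠ CVar.Z i c) (h : NB ρ) :
    ∀ i c, (CVar.Z i c : CVar n) ∉ H :: ρ := by
  intro i c hm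
  rcases List.mem_cons.1 hm with h1 | h1
  · exact hH i c h1.symm
  · obtain ⟨j, b, he⟩ := h _ h1
    exact nomatch he

lemma bad {R : List (CVar n) → List (CVar n) → Prop}
    (hR : IsWeakBisim (@T n) CAct.tau R) :
    ∀ (γ : List (CVar n)) (i : Fin n) (c c' : Bool), c ≠ c' → NB γ → FB γ i c' →
      ¬ R (CVar.Z i c :: γ) γ := by
  intro γ
  induction γ with
  | nil => intro i c c' _ _ hFB _; exact FB_nil hFB
  | cons H γ₂ ih =>
    intro i c c' hcc hNB hFB hrel
    obtain ⟨j, b, rfl⟩ := hNB H (List.mem_cons_self ..)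
    have htr : T (CVar.Z i c :: (CVar.B j b :: γ₂)) (CAct.a i c) (CVar.B j b :: γ₂) :=
      trans_mk _ (CRule.z_a i c)
    rcases hR.2 _ _ _ _ hrel htr with ⟨h0, -⟩ | ⟨g1, g2, b', s1, tr, s2, hrel2⟩
    · exact nomatch h0
    have hg1 : g1 = CVar.B j b :: γ₂ := silent_eq_of_no_tau (nb_no_Z hNB) s1
    subst hg1
    obtain ⟨w, hr2, rfl⟩ := trans_inv tr
    cases hr2 with
    | b_self =>
      rcases hFB with h1 | ⟨h2, -⟩
      · exact hcc (by simpa [hid] using h1)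
      · exact h2 _ rfl
    | b_obs _ _ _ _ hne =>
      have hFB2 : FB γ₂ i c' := by
        rcases hFB with h1 | ⟨-, h⟩
        · exact absurd (by simpa [hid] using congrArg (Option.map Prod.fst) h1) hne.symm
        · exact h
      have hb' : b' = CVar.BP j b i c :: γ₂ :=
        silent_eq_of_no_tau (no_Z_of_head (fun _ _ h => nomatch h) (NB_tail hNB)) s2
      subst hb'
      have htr2 : T (CVar.BP j b i c :: γ₂) CAct.d (CVar.Z i c :: γ₂) :=
        trans_mk _ (CRule.bp_d j b i c hne)
      rcases hR.2 _ _ _ _ (hR.1 hrel2) htr2 with ⟨h0, -⟩ | ⟨g1', g2', b'', s1', tr', s2', hrel3⟩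
      · exact nomatch h0
      have hg1' : g1' = CVar.B j b :: γ₂ := silent_eq_of_no_tau (nb_no_Z hNB) s1'
      subst hg1'
      obtain ⟨w', hr', rfl⟩ := trans_inv tr'
      cases hr' with
      | b_d =>
        have hb'' : b'' = γ₂ := silent_eq_of_no_tau (nb_no_Z (NB_tail hNB)) s2'
        subst hb''
        exact ih i c c' hcc (NB_tail hNB) hFB2 hrel3

end CounterAux

/-- Multi-bit test in the counter system Δ₀: for a valid encoding α of b_n…b_1
and β built from Z-variables, βα ≃ α iff Var(β) ⊆ { Z_1^{b_1}, …, Z_n^{b_n} },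
and likewise for weak bisimilarity. -/
theorem counter_bits_test {n : ℕ} (α β : List (CVar n)) (bits : Fin n → Bool)
    (hα : ValidEnc α bits)
    (hβ : ∀ X ∈ β, ∃ (i : Fin n) (b : Bool), X = CVar.Z i b) :
    (CBisim (β ++ α) α ↔ ∀ X ∈ β, ∃ i : Fin n, X = CVar.Z i (bits i)) ∧
    (CWeak (β ++ α) α ↔ ∀ X ∈ β, ∃ i : Fin n, X = CVar.Z i (bits i)) := by
  have hNBα : CounterAux.NB α := fun X hX => hα.1 X hX
  have heasy : (∀ X ∈ β, ∃ i, X = CVar.Z i (bits i)) → CBisim (β ++ α) α := by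
    intro h
    refine ⟨CounterAux.R, CounterAux.R_bisim, Or.inr
      ⟨β, [], α, α, rfl, rfl, ?_, CounterAux.ZL_nil, ?_, CounterAux.ZOK_nil,
        Or.inl ⟨rfl, hNBα⟩⟩⟩
    · intro X hX; obtain ⟨i, rfl⟩ := h X hX; exact ⟨i, _, rfl⟩
    · intro i c hm
      obtain ⟨i', he⟩ := h _ hm
      obtain ⟨rfl, rfl⟩ : i = i' ∧ c = bits i' := by simpa [CVar.Z.injEq] using he
      exact CounterAux.fb_of_valid hα i
  have hbw : ∀ p q : List (CVar n), CBisim p q → CWeak p q := by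
    rintro p q ⟨R, hRb, hr⟩
    exact ⟨R, CounterAux.br_to_wk hRb, hr⟩
  have hhard : CWeak (β ++ α) α → ∀ X ∈ β, ∃ i, X = CVar.Z i (bits i) := by
    rintro ⟨Rw, hRw, hrel⟩ X hX
    obtain ⟨i, c, rfl⟩ := hβ X hX
    refine ⟨i, ?_⟩
    by_contra hne
    have hc : c ≠ bits i := fun h => hne (by rw [h])
    obtain ⟨s, t, hβeq⟩ := List.append_of_mem hX
    subst hβeq
    have hstrip : SilentStar (@CounterAux.T n) CAct.tau ((s ++ CVar.Z i c :: t) ++ α)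
        ((CVar.Z i c :: t) ++ α) := by
      have := CounterAux.strip s ((CVar.Z i c :: t) ++ α)
        (fun Y hY => hβ Y (List.mem_append_left _ hY))
      simpa [List.append_assoc] using this
    obtain ⟨q', hq', hrel1⟩ := CounterAux.wk_silent hRw hrel hstrip
    have hq'α : q' = α := CounterAux.silent_eq_of_no_tau (CounterAux.nb_no_Z hNBα) hq'
    rw [hq'α] at hrel1
    have hFBα : CounterAux.FB α i (bits i) := CounterAux.fb_of_valid hα i
    have htr : CounterAux.T ((CVar.Z i c :: t) ++ α) (CAct.a i c) (t ++ α) :=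
      CounterAux.trans_mk _ (CRule.z_a i c)
    rcases hRw.2 _ _ _ _ hrel1 htr with ⟨h0, -⟩ | ⟨g1, g2, b', s1, tr, s2, hrel2⟩
    · exact nomatch h0
    have hg1 : g1 = α := CounterAux.silent_eq_of_no_tau (CounterAux.nb_no_Z hNBα) s1
    rw [hg1] at tr
    cases α with
    | nil => exact CounterAux.FB_nil hFBα
    | cons H α₂ =>
      obtain ⟨j, b, rfl⟩ := hNBα H (List.mem_cons_self ..)
      obtain ⟨w, hr2, rfl⟩ := CounterAux.trans_inv tr
      cases hr2 with
      | b_self =>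
        rcases hFBα with h1 | ⟨h2, -⟩
        · exact hc (by simpa [CounterAux.hid] using h1)
        · exact h2 _ rfl
      | b_obs _ _ _ _ hne2 =>
        have hFBα₂ : CounterAux.FB α₂ i (bits i) := by
          rcases hFBα with h1 | ⟨-, h⟩
          · exact absurd
              (by simpa [CounterAux.hid] using congrArg (Option.map Prod.fst) h1) hne2.symm
          · exact h
        have hb' : b' = CVar.BP j b i c :: α₂ :=
          CounterAux.silent_eq_of_no_tau
            (CounterAux.no_Z_of_head (fun _ _ h => nomatch h)
              (CounterAux.NB_tail hNBα)) s2
        subst hb'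
        have htr2 : CounterAux.T (CVar.BP j b i c :: α₂) CAct.d (CVar.Z i c :: α₂) :=
          CounterAux.trans_mk _ (CRule.bp_d j b i c hne2)
        rcases hRw.2 _ _ _ _ (hRw.1 hrel2) htr2 with ⟨h0, -⟩ |
          ⟨g1', g2', b'', s1', tr', s2', hrel3⟩
        · exact nomatch h0
        obtain ⟨t₂, hg1', ht₂⟩ := CounterAux.silent_zl
          (fun Y hY => hβ Y (List.mem_append_right _ (List.mem_cons_of_mem _ hY))) hNBα s1'
        subst hg1'
        cases t₂ with
        | cons w' t₃ =>
          obtain ⟨iz, cz, rfl⟩ := ht₂ w' (List.mem_cons_self ..)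
          obtain ⟨w'', hr'', -⟩ := CounterAux.trans_inv tr'
          cases hr''
        | nil =>
          obtain ⟨w', hr', rfl⟩ := CounterAux.trans_inv tr'
          cases hr' with
          | b_d =>
            have hb'' : b'' = α₂ :=
              CounterAux.silent_eq_of_no_tau (CounterAux.nb_no_Z (CounterAux.NB_tail hNBα)) s2'
            rw [hb''] at hrel3
            exact CounterAux.bad hRw α₂ i c (bits i) hc (CounterAux.NB_tail hNBα) hFBα₂ hrel3
  exact ⟨⟨fun h => hhard (hbw _ _ h), heasy⟩, ⟨hhard, fun h => hbw _ _ (heasy h)⟩⟩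
end

section
/- In the counter BPA system Δ₀ restricted to variables { B_1^1, …, B_n^1 } and { Z_1^1, …, Z_n^1 }, for a process γ with Var(γ) ⊆ { B_1^1, …, B_n^1 }, the following are equivalent: (1) Z_1^1 Z_2^1 … Z_n^1 γ ≃ γ; (2) Z_1^1 Z_2^1 … Z_n^1 γ ≈ γ; (3) Var(γ) = { B_1^1, …, B_n^1 }. -/
namespace CounterQsatAux

variable {n : ℕ}

/-- A list of Z-variables with flag `true`. -/
def ZL (ζ : List (Fin n)) : List (CVar n) := ζ.map fun j => CVar.Z j true

/-- All variables are B's with flag `true`. -/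
def AllB (α : List (CVar n)) : Prop := ∀ X ∈ α, ∃ i : Fin n, X = CVar.B i true

abbrev Tr : List (CVar n) → CAct n → List (CVar n) → Prop := BPA.Trans (@CRule n)

lemma tr_cons {X : CVar n} {β α : List (CVar n)} {l : CAct n} (h : CRule X l α) :
    Tr (X :: β) l (α ++ β) := ⟨X, α, β, rfl, h, rfl⟩

lemma tr_cons_inv {X : CVar n} {β q : List (CVar n)} {l : CAct n}
    (h : Tr (X :: β) l q) : ∃ α, CRule X l α ∧ q = α ++ β := by
  obtain ⟨X', α, β', hp, hr, hq⟩ := h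
  injection hp with h1 h2
  subst h1; subst h2
  exact ⟨α, hr, hq⟩

lemma tr_nil {l : CAct n} {q : List (CVar n)} (h : Tr [] l q) : False := by
  obtain ⟨X', α, β', hp, _, _⟩ := h
  simp at hp

lemma allB_tail {X : CVar n} {β : List (CVar n)} (h : AllB (X :: β)) : AllB β :=
  fun Y hY => h Y (List.mem_cons_of_mem _ hY)

lemma allB_no_tau {δ q : List (CVar n)} (h : AllB δ) (htr : Tr δ CAct.tau q) : False := by
  cases δ with
  | nil => exact tr_nil htr
  | cons X β =>
    obtain ⟨m, rfl⟩ := h X (List.mem_cons_self)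
    obtain ⟨α, hr, _⟩ := tr_cons_inv htr
    cases hr

lemma silent_fixed {δ x : List (CVar n)} (h : ∀ q, ¬ Tr δ CAct.tau q)
    (hs : SilentStar (@Tr n) CAct.tau δ x) : x = δ := by
  rcases Relation.ReflTransGen.cases_head hs with h1 | ⟨c, hc, _⟩
  · exact h1.symm
  · exact absurd hc (h c)

lemma silent_allB {δ x : List (CVar n)} (h : AllB δ)
    (hs : SilentStar (@Tr n) CAct.tau δ x) : x = δ :=
  silent_fixed (fun q hq => allB_no_tau h hq) hs

lemma silent_bp {i : Fin n} {b : Bool} {j : Fin n} {b' : Bool} {β x : List (CVar n)}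
    (hs : SilentStar (@Tr n) CAct.tau (CVar.BP i b j b' :: β) x) :
    x = CVar.BP i b j b' :: β := by
  refine silent_fixed (fun q hq => ?_) hs
  obtain ⟨α, hr, _⟩ := tr_cons_inv hq
  cases hr

lemma silent_zl {δ : List (CVar n)} (hδ : AllB δ) :
    ∀ {p x : List (CVar n)}, SilentStar (@Tr n) CAct.tau p x →
      ∀ ζ : List (Fin n), p = ZL ζ ++ δ → ∃ ζ', x = ZL ζ' ++ δ := by
  intro p x hs
  induction hs using Relation.ReflTransGen.head_induction_on with
  | refl => intro ζ h; exact ⟨ζ, h⟩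
  | head hstep _ ih =>
    intro ζ hp
    subst hp
    cases ζ with
    | nil => exact absurd hstep (fun h => allB_no_tau hδ h)
    | cons k ζ' =>
      obtain ⟨α, hr, hq⟩ := tr_cons_inv hstep
      cases hr
      exact ih ζ' hq

lemma strip_silent (ζ : List (Fin n)) (α : List (CVar n)) :
    SilentStar (@Tr n) CAct.tau (ZL ζ ++ α) α := by
  induction ζ with
  | nil => exact Relation.ReflTransGen.refl
  | cons k ζ' ih =>
    exact Relation.ReflTransGen.head (tr_cons (CRule.z_tau k true)) ih

/-- The branching bisimulation witnessing direction (3) ⇒ (1). -/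
inductive Pre : List (CVar n) → List (CVar n) → Prop
  | refl (α : List (CVar n)) : Pre α α
  | g1 (ζ : List (Fin n)) (α : List (CVar n)) (hα : AllB α)
      (hζ : ∀ j ∈ ζ, CVar.B j true ∈ α) : Pre (ZL ζ ++ α) α
  | sw (ζ : List (Fin n)) (i j : Fin n) (β : List (CVar n)) (hβ : AllB β)
      (hj : CVar.B j true ∈ β) (hji : j ≠ i)
      (hζ : ∀ k ∈ ζ, CVar.B k true ∈ CVar.B i true :: β) :
      Pre (ZL ζ ++ CVar.B i true :: β) (CVar.BP i true j true :: β)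

def Rel (p q : List (CVar n)) : Prop := Pre p q ∨ Pre q p

lemma rel_refl (α : List (CVar n)) : Rel α α := Or.inl (Pre.refl α)

lemma rel_bisim : IsBranchingBisim (@Tr n) CAct.tau (@Rel n) := by
  constructor
  · intro p q h; exact h.symm
  · intro a b a' l hab htr
    rcases hab with h | h
    · cases h with
      | refl _ =>
        exact Or.inr ⟨a, a', Relation.ReflTransGen.refl, htr, rel_refl a, rel_refl a'⟩
      | g1 ζ α hα hζ =>
        cases ζ with
        | nil =>
          exact Or.inr ⟨b, a', Relation.ReflTransGen.refl, htr, rel_refl b, rel_refl a'⟩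
        | cons k ζ' =>
          obtain ⟨α₀, hr, rfl⟩ := tr_cons_inv htr
          cases hr with
          | z_tau =>
            exact Or.inl ⟨rfl, Or.inl (Pre.g1 ζ' b hα
              (fun j hj => hζ j (List.mem_cons_of_mem _ hj)))⟩
          | z_a =>
            have hmem : CVar.B k true ∈ b := hζ k (List.mem_cons_self)
            cases b with
            | nil => exact absurd hmem List.not_mem_nil
            | cons Y βt =>
              obtain ⟨m, rfl⟩ := hα Y (List.mem_cons_self)
              by_cases hmk : m = k
              · subst hmk
                exact Or.inr ⟨CVar.B m true :: βt, CVar.B m true :: βt,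
                  Relation.ReflTransGen.refl, tr_cons (CRule.b_self m true),
                  Or.inl (Pre.g1 (m :: ζ') _ hα hζ),
                  Or.inl (Pre.g1 ζ' _ hα (fun j hj => hζ j (List.mem_cons_of_mem _ hj)))⟩
              · have hk_ne : k ≠ m := fun h => hmk h.symm
                have hkβ : CVar.B k true ∈ βt := by
                  rcases List.mem_cons.mp hmem with h | h
                  · rw [CVar.B.injEq] at h
                    exact absurd h.1.symm hmk
                  · exact h
                exact Or.inr ⟨CVar.B m true :: βt, CVar.BP m true k true :: βt,
                  Relation.ReflTransGen.refl, tr_cons (CRule.b_obs m true k true hk_ne),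
                  Or.inl (Pre.g1 (k :: ζ') _ hα hζ),
                  Or.inl (Pre.sw ζ' m k βt (allB_tail hα) hkβ hk_ne
                    (fun j hj => hζ j (List.mem_cons_of_mem _ hj)))⟩
      | sw ζ i j β hβ hj hji hζ =>
        cases ζ with
        | nil =>
          obtain ⟨α₀, hr, rfl⟩ := tr_cons_inv htr
          cases hr with
          | b_self =>
            exact Or.inr ⟨CVar.BP i true j true :: β, CVar.BP i true j true :: β,
              Relation.ReflTransGen.refl, tr_cons (CRule.bp_self i true j true hji),
              Or.inl (Pre.sw [] i j β hβ hj hji (by simp)),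
              Or.inl (Pre.sw [] i j β hβ hj hji (by simp))⟩
          | b_d =>
            exact Or.inr ⟨CVar.BP i true j true :: β, CVar.Z j true :: β,
              Relation.ReflTransGen.refl, tr_cons (CRule.bp_d i true j true hji),
              Or.inl (Pre.sw [] i j β hβ hj hji (by simp)),
              Or.inr (Pre.g1 [j] β hβ (by simpa using hj))⟩
          | b_obs _ _ k b0 hki =>
            exact Or.inr ⟨CVar.BP i true j true :: β, CVar.BP i true k b0 :: β,
              Relation.ReflTransGen.refl, tr_cons (CRule.bp_obs i true j true k b0 hji hki),
              Or.inl (Pre.sw [] i j β hβ hj hji (by simp)),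
              rel_refl _⟩
        | cons k ζ' =>
          obtain ⟨α₀, hr, rfl⟩ := tr_cons_inv htr
          cases hr with
          | z_tau =>
            exact Or.inl ⟨rfl, Or.inl (Pre.sw ζ' i j β hβ hj hji
              (fun x hx => hζ x (List.mem_cons_of_mem _ hx)))⟩
          | z_a =>
            by_cases hki : k = i
            · subst hki
              exact Or.inr ⟨CVar.BP k true j true :: β, CVar.BP k true j true :: β,
                Relation.ReflTransGen.refl, tr_cons (CRule.bp_self k true j true hji),
                Or.inl (Pre.sw (k :: ζ') k j β hβ hj hji hζ),
                Or.inl (Pre.sw ζ' k j β hβ hj hji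
                  (fun x hx => hζ x (List.mem_cons_of_mem _ hx)))⟩
            · have hkβ : CVar.B k true ∈ β := by
                rcases List.mem_cons.mp (hζ k (List.mem_cons_self)) with h | h
                · rw [CVar.B.injEq] at h
                  exact absurd h.1 hki
                · exact h
              exact Or.inr ⟨CVar.BP i true j true :: β, CVar.BP i true k true :: β,
                Relation.ReflTransGen.refl, tr_cons (CRule.bp_obs i true j true k true hji hki),
                Or.inl (Pre.sw (k :: ζ') i j β hβ hj hji hζ),
                Or.inl (Pre.sw ζ' i k β hβ hkβ hki
                  (fun x hx => hζ x (List.mem_cons_of_mem _ hx)))⟩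
    · cases h with
      | refl _ =>
        exact Or.inr ⟨a, a', Relation.ReflTransGen.refl, htr, rel_refl a, rel_refl a'⟩
      | g1 ζ α hα hζ =>
        exact Or.inr ⟨a, a', strip_silent ζ a, htr, rel_refl a, rel_refl a'⟩
      | sw ζ i j β hβ hj hji hζ =>
        obtain ⟨α₀, hr, rfl⟩ := tr_cons_inv htr
        cases hr with
        | bp_self _ _ _ _ _ =>
          exact Or.inr ⟨CVar.B i true :: β, CVar.B i true :: β,
            strip_silent ζ _, tr_cons (CRule.b_self i true),
            Or.inr (Pre.sw [] i j β hβ hj hji (by simp)),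
            Or.inr (Pre.sw [] i j β hβ hj hji (by simp))⟩
        | bp_d _ _ _ _ _ =>
          exact Or.inr ⟨CVar.B i true :: β, β,
            strip_silent ζ _, tr_cons (CRule.b_d i true),
            Or.inr (Pre.sw [] i j β hβ hj hji (by simp)),
            Or.inl (Pre.g1 [j] β hβ (by simpa using hj))⟩
        | bp_obs _ _ _ _ j' b0 _ h2 =>
          exact Or.inr ⟨CVar.B i true :: β, CVar.BP i true j' b0 :: β,
            strip_silent ζ _, tr_cons (CRule.b_obs i true j' b0 h2),
            Or.inr (Pre.sw [] i j β hβ hj hji (by simp)),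
            rel_refl _⟩

lemma br_to_wk {S A : Type*} {trans : S → A → S → Prop} {tau : A} {p q : S}
    (h : BrBisim trans tau p q) : WkBisim trans tau p q := by
  obtain ⟨R, ⟨hs, ht⟩, hpq⟩ := h
  refine ⟨R, ⟨hs, fun a b a' l hab htr => ?_⟩, hpq⟩
  rcases ht a b a' l hab htr with h1 | ⟨b'', b', h1, h2, _, h4⟩
  · exact Or.inl h1
  · exact Or.inr ⟨b'', b', b', h1, h2, Relation.ReflTransGen.refl, h4⟩

lemma strip_R {R : List (CVar n) → List (CVar n) → Prop}
    (hR : IsWeakBisim (@Tr n) CAct.tau R) {p q p' : List (CVar n)}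
    (hq : AllB q) (hpq : R p q) (htr : Tr p CAct.tau p') : R p' q := by
  rcases hR.2 p q p' CAct.tau hpq htr with ⟨_, h⟩ | ⟨g1, g2, _, hs1, htr2, _, _⟩
  · exact h
  · have := silent_allB hq hs1
    subst this
    exact absurd htr2 (fun h => allB_no_tau hq h)

lemma key {R : List (CVar n) → List (CVar n) → Prop}
    (hR : IsWeakBisim (@Tr n) CAct.tau R) (i : Fin n) :
    ∀ δ : List (CVar n), AllB δ → CVar.B i true ∉ δ →
      ∀ ζ : List (Fin n), ¬ R (CVar.Z i true :: (ZL ζ ++ δ)) δ := by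
  intro δ
  induction δ with
  | nil =>
    intro _ _ ζ hRp
    have htr : Tr (CVar.Z i true :: (ZL ζ ++ [])) (CAct.a i true) (ZL ζ ++ []) :=
      tr_cons (CRule.z_a i true)
    rcases hR.2 _ _ _ _ hRp htr with ⟨h, _⟩ | ⟨g1, g2, b', hs1, htr2, hs2, hb⟩
    · cases h
    · have hg1 : g1 = [] := silent_allB (fun X hX => absurd hX List.not_mem_nil) hs1
      subst hg1
      exact tr_nil htr2
  | cons X βt ih =>
    intro hall hni ζ hRp
    obtain ⟨m, rfl⟩ := hall X (List.mem_cons_self)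
    have hmi : m ≠ i := fun h => hni (h ▸ List.mem_cons_self)
    have htr : Tr (CVar.Z i true :: (ZL ζ ++ (CVar.B m true :: βt))) (CAct.a i true)
        (ZL ζ ++ (CVar.B m true :: βt)) := tr_cons (CRule.z_a i true)
    rcases hR.2 _ _ _ _ hRp htr with ⟨h, _⟩ | ⟨g1, g2, b', hs1, htr2, hs2, hb⟩
    · cases h
    · have hg1 : g1 = CVar.B m true :: βt := silent_allB hall hs1
      subst hg1
      obtain ⟨α₀, hr, rfl⟩ := tr_cons_inv htr2
      cases hr with
      | b_self => exact hni (List.mem_cons_self)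
      | b_obs _ _ _ _ hne =>
        have hb' : b' = CVar.BP m true i true :: βt := silent_bp hs2
        subst hb'
        have hRsym := hR.1 hb
        have htr3 : Tr (CVar.BP m true i true :: βt) CAct.d
            ([CVar.Z i true] ++ βt) := tr_cons (CRule.bp_d m true i true hne)
        rcases hR.2 _ _ _ _ hRsym htr3 with ⟨h, _⟩ | ⟨g1', g2', b'', hs1', htr2', hs2', hb2⟩
        · cases h
        · obtain ⟨ζ'', hg⟩ := silent_zl hall hs1' ζ rfl
          subst hg
          cases ζ'' with
          | cons k ζ3 =>
            obtain ⟨α₀', hr', _⟩ := tr_cons_inv htr2'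
            cases hr'
          | nil =>
            obtain ⟨α₀', hr', rfl⟩ := tr_cons_inv htr2'
            cases hr'
            have hb'' : b'' = βt := silent_allB (allB_tail hall) hs2'
            subst hb''
            exact ih (allB_tail hall) (fun h => hni (List.mem_cons_of_mem _ h)) [] hb2

end CounterQsatAux

/-- For γ built from the variables B_1^1, …, B_n^1, the following are
equivalent: (1) Z_1^1…Z_n^1 γ ≃ γ; (2) Z_1^1…Z_n^1 γ ≈ γ;
(3) Var(γ) = { B_1^1, …, B_n^1 }. -/
theorem counter_qsat_test {n : ℕ} (γ : List (CVar n))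
    (hγ : ∀ X ∈ γ, ∃ i : Fin n, X = CVar.B i true) :
    (CBisim ((List.ofFn fun i : Fin n => CVar.Z i true) ++ γ) γ ↔
      ∀ i : Fin n, CVar.B i true ∈ γ) ∧
    (CWeak ((List.ofFn fun i : Fin n => CVar.Z i true) ++ γ) γ ↔
      ∀ i : Fin n, CVar.B i true ∈ γ) := by
  classical
  have hγ' : CounterQsatAux.AllB γ := hγ
  have hZL : CounterQsatAux.ZL (List.ofFn (id : Fin n → Fin n)) =
      (List.ofFn fun i : Fin n => CVar.Z i true) := by
    simp [CounterQsatAux.ZL, List.map_ofFn]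
  have h3to1 : (∀ i : Fin n, CVar.B i true ∈ γ) →
      CBisim ((List.ofFn fun i : Fin n => CVar.Z i true) ++ γ) γ := by
    intro h
    refine ⟨CounterQsatAux.Rel, CounterQsatAux.rel_bisim, ?_⟩
    rw [← hZL]
    exact Or.inl (CounterQsatAux.Pre.g1 _ γ hγ' (fun j _ => h j))
  have h2to3 : CWeak ((List.ofFn fun i : Fin n => CVar.Z i true) ++ γ) γ →
      ∀ i : Fin n, CVar.B i true ∈ γ := by
    intro hW i
    by_contra hni
    obtain ⟨R, hR, hR0⟩ := hW
    rw [← hZL] at hR0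
    have main : ∀ ζ : List (Fin n), i ∈ ζ →
        R (CounterQsatAux.ZL ζ ++ γ) γ → False := by
      intro ζ
      induction ζ with
      | nil => intro h; exact absurd h List.not_mem_nil
      | cons k ζ' ihz =>
        intro hmem hRp
        by_cases hk : k = i
        · subst hk
          exact CounterQsatAux.key hR k γ hγ' hni ζ' hRp
        · have hi' : i ∈ ζ' := by
            rcases List.mem_cons.mp hmem with h | h
            · exact absurd h.symm hk
            · exact h
          have step : CounterQsatAux.Tr (CounterQsatAux.ZL (k :: ζ') ++ γ) CAct.tau
              (CounterQsatAux.ZL ζ' ++ γ) := CounterQsatAux.tr_cons (CRule.z_tau k true)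
          exact ihz hi' (CounterQsatAux.strip_R hR hγ' hRp step)
    exact main (List.ofFn id) ((List.mem_ofFn.mpr ⟨i, rfl⟩)) hR0
  refine ⟨⟨fun h => h2to3 (CounterQsatAux.br_to_wk h), h3to1⟩,
    ⟨h2to3, fun h => CounterQsatAux.br_to_wk (h3to1 h)⟩⟩
end

section
/- If a process X₀α of a normed BPA system admits a witness path in the graph G(Δ) — a path (X₀, Rd(α)) →^{u₁} (X₁,R₁) →^{u₂} … →^{u_k} (X_k,R_k) with some 0 ≤ i < k such that X_i = X_k, R_i = R_k, and Σ_{j=i+1}^{k} u_j > 0 — then for every m > 0 there is a process β_m reachable from X₀α with branching norm ‖β_m‖_b ≥ m; consequently X₀α is not regular with respect to branching bisimilarity. -/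
/-- γ ⇒_{≃} γ' : silent moves between branching bisimilar processes. -/
def SBStar {S A : Type*} (trans : S → A → S → Prop) (tau : A) (p q : S) : Prop :=
  SilentStar trans tau p q ∧ BrBisim trans tau p q

/-- A state-changing step: a visible action, or a silent step to a
non-branching-bisimilar state. -/
def JStep {S A : Type*} (trans : S → A → S → Prop) (tau : A) (p q : S) : Prop :=
  (∃ a, a ≠ tau ∧ trans p a q) ∨ (trans p tau q ∧ ¬ BrBisim trans tau p q)

/-- `Cost trans tau p q k` : there is a sequence from `p` to `q` alternating
≃-preserving silent phases and state-changing steps, with exactly `k`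
state-changing steps. -/
inductive Cost {S A : Type*} (trans : S → A → S → Prop) (tau : A) : S → S → ℕ → Prop
  | zero {p q : S} : SBStar trans tau p q → Cost trans tau p q 0
  | step {p p' p'' q : S} {k : ℕ} : SBStar trans tau p p' → JStep trans tau p' p'' →
      Cost trans tau p'' q k → Cost trans tau p q (k + 1)

/-- The branching norm of α relative to β: minimal number of state-changing
steps to reduce αβ to β. -/
noncomputable def BPA.bnormRel {V A : Type*} (rules : V → A → List V → Prop) (tau : A)
    (α β : List V) : ℕ :=
  sInf {k | Cost (BPA.Trans rules) tau (α ++ β) β k}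

/-- The branching norm of α. -/
noncomputable def BPA.bnorm {V A : Type*} (rules : V → A → List V → Prop) (tau : A)
    (α : List V) : ℕ :=
  BPA.bnormRel rules tau α []

/-- A realizable redundant set. -/
def BPA.Realizable {V A : Type*} (rules : V → A → List V → Prop) (tau : A)
    (R : Set V) : Prop :=
  ∃ γ : List V, BPA.Rd rules tau γ = R

/-- Edge of the graph G(Δ): there is a rule X₁ →λ σX₂δ with
Rd(δγ_{R₁}) = R₂ for a representative γ of R₁. -/
def BPA.GEdge {V A : Type*} (rules : V → A → List V → Prop) (tau : A)
    (X₁ : V) (R₁ : Set V) (X₂ : V) (R₂ : Set V) : Prop :=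
  ∃ (l : A) (σ δ γ : List V), rules X₁ l (σ ++ X₂ :: δ) ∧
    BPA.Rd rules tau γ = R₁ ∧ BPA.Rd rules tau (δ ++ γ) = R₂

/-- The condition making an edge of G(Δ) have weight 1: some witnessing rule
additionally satisfies ‖δ‖_b^{R₁} > 0. -/
def BPA.GHeavy {V A : Type*} (rules : V → A → List V → Prop) (tau : A)
    (X₁ : V) (R₁ : Set V) (X₂ : V) (R₂ : Set V) : Prop :=
  ∃ (l : A) (σ δ γ : List V), rules X₁ l (σ ++ X₂ :: δ) ∧
    BPA.Rd rules tau γ = R₁ ∧ BPA.Rd rules tau (δ ++ γ) = R₂ ∧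
    0 < BPA.bnormRel rules tau δ γ

/-- Combined transition relation of the disjoint sum of a BPA system and an
arbitrary labeled transition system. -/
def SumTrans {S₁ S₂ A : Type*} (t₁ : S₁ → A → S₁ → Prop) (t₂ : S₂ → A → S₂ → Prop) :
    S₁ ⊕ S₂ → A → S₁ ⊕ S₂ → Prop
  | .inl p, l, .inl q => t₁ p l q
  | .inr p, l, .inr q => t₂ p l q
  | _, _, _ => False

/-- A BPA process is regular w.r.t. branching bisimilarity if it is branching
bisimilar to a finite-state process of some (possibly different) labeled
transition system over the same actions. -/
def BPA.RegularBr {V : Type*} {A : Type} (rules : V → A → List V → Prop) (tau : A)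
    (α : List V) : Prop :=
  ∃ (S : Type) (t : S → A → S → Prop) (s : S),
    {q | Relation.ReflTransGen (fun p q => ∃ l, t p l q) s q}.Finite ∧
    BrBisim (SumTrans (BPA.Trans rules) t) tau (Sum.inl α) (Sum.inr s)

section Generic

variable {S A : Type*} {trans : S → A → S → Prop} {tau : A}

theorem br_refl (p : S) : BrBisim trans tau p p := by
  refine ⟨Eq, ⟨fun a b h => h.symm, ?_⟩, rfl⟩
  rintro a b a' l rfl ht
  exact Or.inr ⟨a, a', Relation.ReflTransGen.refl, ht, rfl, rfl⟩

theorem br_symm {p q : S} (h : BrBisim trans tau p q) : BrBisim trans tau q p := by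
  obtain ⟨R, hR, hpq⟩ := h
  exact ⟨R, hR, hR.1 hpq⟩

theorem br_transfer {a b a' : S} {l : A} (h : BrBisim trans tau a b)
    (ht : trans a l a') :
    (l = tau ∧ BrBisim trans tau a' b) ∨
    ∃ b'' b', SilentStar trans tau b b'' ∧ trans b'' l b' ∧
      BrBisim trans tau a b'' ∧ BrBisim trans tau a' b' := by
  obtain ⟨R, hR, hab⟩ := h
  rcases hR.2 a b a' l hab ht with ⟨hl, h1⟩ | ⟨b'', b', hs, ht', h1, h2⟩
  · exact Or.inl ⟨hl, ⟨R, hR, h1⟩⟩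
  · exact Or.inr ⟨b'', b', hs, ht', ⟨R, hR, h1⟩, ⟨R, hR, h2⟩⟩

/-- Semi-branching bisimulation (Basten). -/
def IsSbBisim (trans : S → A → S → Prop) (tau : A) (R : S → S → Prop) : Prop :=
  Symmetric R ∧
  ∀ a b a' (l : A), R a b → trans a l a' →
    (∃ b'', SilentStar trans tau b b'' ∧ l = tau ∧ R a b'' ∧ R a' b'') ∨
    (∃ b'' b', SilentStar trans tau b b'' ∧ trans b'' l b' ∧ R a b'' ∧ R a' b')

def SbBisim (trans : S → A → S → Prop) (tau : A) (a b : S) : Prop :=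
  ∃ R, IsSbBisim trans tau R ∧ R a b

theorem sb_refl (p : S) : SbBisim trans tau p p := by
  refine ⟨Eq, ⟨fun a b h => h.symm, ?_⟩, rfl⟩
  rintro a b a' l rfl ht
  exact Or.inr ⟨a, a', Relation.ReflTransGen.refl, ht, rfl, rfl⟩

theorem sb_symm {p q : S} (h : SbBisim trans tau p q) : SbBisim trans tau q p := by
  obtain ⟨R, hR, hpq⟩ := h
  exact ⟨R, hR, hR.1 hpq⟩

theorem sb_of_br {p q : S} (h : BrBisim trans tau p q) : SbBisim trans tau p q := by
  obtain ⟨R, hR, hpq⟩ := h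
  refine ⟨R, ⟨hR.1, ?_⟩, hpq⟩
  intro a b a' l hab ht
  rcases hR.2 a b a' l hab ht with ⟨hl, h1⟩ | ⟨b'', b', hs, ht', h1, h2⟩
  · exact Or.inl ⟨b, Relation.ReflTransGen.refl, hl, hab, h1⟩
  · exact Or.inr ⟨b'', b', hs, ht', h1, h2⟩

theorem sb_transfer {a b a' : S} {l : A} (h : SbBisim trans tau a b)
    (ht : trans a l a') :
    (∃ b'', SilentStar trans tau b b'' ∧ l = tau ∧ SbBisim trans tau a b'' ∧
      SbBisim trans tau a' b'') ∨
    (∃ b'' b', SilentStar trans tau b b'' ∧ trans b'' l b' ∧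
      SbBisim trans tau a b'' ∧ SbBisim trans tau a' b') := by
  obtain ⟨R, hR, hab⟩ := h
  rcases hR.2 a b a' l hab ht with ⟨b'', hs, hl, h1, h2⟩ | ⟨b'', b', hs, ht', h1, h2⟩
  · exact Or.inl ⟨b'', hs, hl, ⟨R, hR, h1⟩, ⟨R, hR, h2⟩⟩
  · exact Or.inr ⟨b'', b', hs, ht', ⟨R, hR, h1⟩, ⟨R, hR, h2⟩⟩

/-- Silent paths are simulated up to semi-branching bisimilarity. -/
theorem sb_silent_sim {b b'' : S} (hs : SilentStar trans tau b b'') :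
    ∀ c, SbBisim trans tau b c →
      ∃ c'', SilentStar trans tau c c'' ∧ SbBisim trans tau b'' c'' := by
  induction hs using Relation.ReflTransGen.head_induction_on with
  | refl => exact fun c h => ⟨c, Relation.ReflTransGen.refl, h⟩
  | head hstep _ ih =>
    intro c hbc
    rcases sb_transfer hbc hstep with ⟨c₀, hs0, _, _, h2⟩ | ⟨c₀, c₁, hs0, ht', _, h2⟩
    · obtain ⟨c'', hs'', hb''⟩ := ih c₀ h2
      exact ⟨c'', hs0.trans hs'', hb''⟩
    · obtain ⟨c'', hs'', hb''⟩ := ih c₁ h2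
      exact ⟨c'', (hs0.tail ht').trans hs'', hb''⟩

theorem sb_trans {p q r : S} (hpq : SbBisim trans tau p q) (hqr : SbBisim trans tau q r) :
    SbBisim trans tau p r := by
  refine ⟨fun x z => ∃ y, SbBisim trans tau x y ∧ SbBisim trans tau y z, ⟨?_, ?_⟩, q, hpq, hqr⟩
  · rintro x z ⟨y, h1, h2⟩
    exact ⟨y, sb_symm h2, sb_symm h1⟩
  · rintro a c a' l ⟨b, hab, hbc⟩ ht
    rcases sb_transfer hab ht with ⟨b'', hs, hl, h1, h2⟩ | ⟨b'', b', hs, ht', h1, h2⟩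
    · obtain ⟨c'', hsc, hb''c⟩ := sb_silent_sim hs c hbc
      exact Or.inl ⟨c'', hsc, hl, ⟨b'', h1, hb''c⟩, ⟨b'', h2, hb''c⟩⟩
    · obtain ⟨c₀, hsc, hb''c⟩ := sb_silent_sim hs c hbc
      rcases sb_transfer hb''c ht' with ⟨c₁, hs1, hl, g1, g2⟩ | ⟨c₁, c₂, hs1, ht₂, g1, g2⟩
      · exact Or.inl ⟨c₁, hsc.trans hs1, hl, ⟨b'', h1, g1⟩, ⟨b', h2, g2⟩⟩
      · exact Or.inr ⟨c₁, c₂, hsc.trans hs1, ht₂, ⟨b'', h1, g1⟩, ⟨b', h2, g2⟩⟩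

/-- The stuttering property for semi-branching bisimilarity. -/
theorem sb_stutter {p q r : S} (hpq : SbBisim trans tau p q)
    (h1 : SilentStar trans tau p r) (h2 : SilentStar trans tau r q) :
    SbBisim trans tau r p := by
  classical
  refine ⟨fun x y => SbBisim trans tau x y ∨
    (SilentStar trans tau p x ∧ SilentStar trans tau x q ∧ y = p) ∨
    (x = p ∧ SilentStar trans tau p y ∧ SilentStar trans tau y q),
    ⟨?_, ?_⟩, Or.inr (Or.inl ⟨h1, h2, rfl⟩)⟩
  · rintro x y (h | ⟨ha, hb, rfl⟩ | ⟨rfl, ha, hb⟩)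
    · exact Or.inl (sb_symm h)
    · exact Or.inr (Or.inr ⟨rfl, ha, hb⟩)
    · exact Or.inr (Or.inl ⟨ha, hb, rfl⟩)
  · rintro a b a' l (h | ⟨ha, hb, rfl⟩ | ⟨rfl, ha, hb⟩) ht
    · rcases sb_transfer h ht with ⟨b'', hs, hl, g1, g2⟩ | ⟨b'', b', hs, ht', g1, g2⟩
      · exact Or.inl ⟨b'', hs, hl, Or.inl g1, Or.inl g2⟩
      · exact Or.inr ⟨b'', b', hs, ht', Or.inl g1, Or.inl g2⟩
    · -- pair (a, p) with p ⇒ a ⇒ q : p replays the path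
      exact Or.inr ⟨a, a', ha, ht, Or.inl (sb_refl a), Or.inl (sb_refl a')⟩
    · -- pair (p, b) with p ⇒ b ⇒ q : use q's response, prefixed by b ⇒ q
      rcases sb_transfer hpq ht with ⟨d, hs, hl, g1, g2⟩ | ⟨d, d', hs, ht', g1, g2⟩
      · exact Or.inl ⟨d, hb.trans hs, hl, Or.inl g1, Or.inl g2⟩
      · exact Or.inr ⟨d, d', hb.trans hs, ht', Or.inl g1, Or.inl g2⟩

theorem sb_is_br : IsBranchingBisim trans tau (SbBisim (S := S) trans tau) := by
  refine ⟨fun a b h => sb_symm h, ?_⟩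
  intro a b a' l hab ht
  rcases sb_transfer hab ht with ⟨b'', hs, hl, g1, g2⟩ | ⟨b'', b', hs, ht', g1, g2⟩
  · rcases hs.cases_tail with rfl | ⟨c, hsc, hstep⟩
    · exact Or.inl ⟨hl, g2⟩
    · have hbb'' : SbBisim trans tau b b'' := sb_trans (sb_symm hab) g1
      have hcb : SbBisim trans tau c b :=
        sb_stutter hbb'' hsc (Relation.ReflTransGen.single hstep)
      refine Or.inr ⟨c, b'', hsc, ?_, sb_trans hab (sb_symm hcb), g2⟩
      rw [hl]; exact hstep
  · exact Or.inr ⟨b'', b', hs, ht', g1, g2⟩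

theorem br_of_sb {p q : S} (h : SbBisim trans tau p q) : BrBisim trans tau p q :=
  ⟨SbBisim trans tau, sb_is_br, h⟩

theorem br_trans {p q r : S} (h1 : BrBisim trans tau p q) (h2 : BrBisim trans tau q r) :
    BrBisim trans tau p r :=
  br_of_sb (sb_trans (sb_of_br h1) (sb_of_br h2))

/-- The stuttering lemma for branching bisimilarity. -/
theorem br_stutter {p q r : S} (hpq : BrBisim trans tau p q)
    (h1 : SilentStar trans tau p r) (h2 : SilentStar trans tau r q) :
    BrBisim trans tau r p :=
  br_of_sb (sb_stutter (sb_of_br hpq) h1 h2)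

end Generic

section BPAFacts

variable {V : Type*} {A : Type*} {rules : V → A → List V → Prop} {tau : A}

local notation "T" => BPA.Trans rules
local notation "Br" => BrBisim (BPA.Trans rules) tau
local notation "SStar" => SilentStar (BPA.Trans rules) tau

theorem trans_append {θ θ' ζ : List V} {l : A} (h : T θ l θ') :
    T (θ ++ ζ) l (θ' ++ ζ) := by
  obtain ⟨X, a, β, rfl, hr, rfl⟩ := h
  exact ⟨X, a, β ++ ζ, rfl, hr, by simp⟩

theorem trans_cons_inv {X : V} {θ₀ ζ q : List V} {l : A}
    (h : T ((X :: θ₀) ++ ζ) l q) : ∃ θ', q = θ' ++ ζ ∧ T (X :: θ₀) l θ' := by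
  obtain ⟨X', a, β, heq, hr, rfl⟩ := h
  simp only [List.cons_append, List.cons.injEq] at heq
  obtain ⟨rfl, rfl⟩ := heq
  exact ⟨a ++ θ₀, by simp, ⟨X, a, θ₀, rfl, hr, rfl⟩⟩

theorem trans_nil_inv {q : List V} {l : A} (h : T [] l q) : False := by
  obtain ⟨X, a, β, heq, _, _⟩ := h
  simp at heq

theorem reach_append {θ θ' ζ : List V} (h : BPA.Reach rules θ θ') :
    BPA.Reach rules (θ ++ ζ) (θ' ++ ζ) := by
  induction h with
  | refl => exact Relation.ReflTransGen.refl
  | tail _ hstep ih =>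
    obtain ⟨l, ht⟩ := hstep
    exact ih.tail ⟨l, trans_append ht⟩

theorem reach_nil (hn : BPA.Normed rules) (β : List V) : BPA.Reach rules β [] := by
  induction β with
  | nil => exact Relation.ReflTransGen.refl
  | cons X β₀ ih =>
    have h1 : BPA.Reach rules ([X] ++ β₀) ([] ++ β₀) := reach_append (hn X)
    exact Relation.ReflTransGen.trans h1 ih

theorem reach_suffix (hn : BPA.Normed rules) (θ ζ : List V) :
    BPA.Reach rules (θ ++ ζ) ζ := reach_append (reach_nil hn θ)

/-- Decomposition of a silent path starting from `θ ++ ζ`. -/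
theorem silent_decomp {p r : List V} (h : SStar p r) :
    ∀ θ ζ, p = θ ++ ζ →
      (∃ θ', r = θ' ++ ζ ∧ ∀ ζ₂, SStar (θ ++ ζ₂) (θ' ++ ζ₂)) ∨
      (SStar ζ r ∧ ∀ ζ₂, SStar (θ ++ ζ₂) ζ₂) := by
  induction h using Relation.ReflTransGen.head_induction_on with
  | refl =>
    rintro θ ζ rfl
    exact Or.inl ⟨θ, rfl, fun _ => Relation.ReflTransGen.refl⟩
  | head hstep htail ih =>
    rintro θ ζ rfl
    match θ with
    | [] =>
      exact Or.inr ⟨Relation.ReflTransGen.head hstep htail,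
        fun _ => Relation.ReflTransGen.refl⟩
    | X :: θ₀ =>
      obtain ⟨θ₁, rfl, hstep'⟩ := trans_cons_inv hstep
      rcases ih θ₁ ζ rfl with ⟨θ', rfl, lift⟩ | ⟨hs, lift⟩
      · exact Or.inl ⟨θ', rfl, fun ζ₂ =>
          Relation.ReflTransGen.head (trans_append hstep') (lift ζ₂)⟩
      · exact Or.inr ⟨hs, fun ζ₂ =>
          Relation.ReflTransGen.head (trans_append hstep') (lift ζ₂)⟩

/-- Prepending a single step to a cost sequence. -/
theorem cost_cons {p p₁ q : List V} {l : A} {n : ℕ} (ht : T p l p₁)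
    (c : Cost (BPA.Trans rules) tau p₁ q n) :
    Cost (BPA.Trans rules) tau p q n ∨ Cost (BPA.Trans rules) tau p q (n + 1) := by
  classical
  by_cases habs : l = tau ∧ Br p p₁
  · obtain ⟨rfl, hbr⟩ := habs
    cases c with
    | zero hsb =>
      exact Or.inl (Cost.zero ⟨Relation.ReflTransGen.head ht hsb.1, br_trans hbr hsb.2⟩)
    | step hsb hJ c' =>
      exact Or.inl (Cost.step ⟨Relation.ReflTransGen.head ht hsb.1,
        br_trans hbr hsb.2⟩ hJ c')
  · have hJ : JStep (BPA.Trans rules) tau p p₁ := by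
      by_cases hl : l = tau
      · subst hl
        exact Or.inr ⟨ht, fun hbr => habs ⟨rfl, hbr⟩⟩
      · exact Or.inl ⟨l, hl, ht⟩
    exact Or.inr (Cost.step ⟨Relation.ReflTransGen.refl, br_refl _⟩ hJ c)

/-- Any transition path can be turned into a cost sequence. -/
theorem cost_of_reach {p q : List V} (h : BPA.Reach rules p q) :
    ∃ n, Cost (BPA.Trans rules) tau p q n := by
  induction h using Relation.ReflTransGen.head_induction_on with
  | refl => exact ⟨0, Cost.zero ⟨Relation.ReflTransGen.refl, br_refl _⟩⟩
  | head hstep _ ih =>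
    obtain ⟨l, ht⟩ := hstep
    obtain ⟨n, c⟩ := ih
    rcases cost_cons ht c with c' | c'
    exacts [⟨n, c'⟩, ⟨n + 1, c'⟩]

theorem jstep_trans {p q : List V} (h : JStep (BPA.Trans rules) tau p q) :
    ∃ l, T p l q := by
  rcases h with ⟨a, _, ht⟩ | ⟨ht, _⟩
  exacts [⟨a, ht⟩, ⟨tau, ht⟩]

/-- Splitting a cost sequence at the first time it exposes the suffix ζ. -/
theorem cost_split {ζ : List V} : ∀ {p q : List V} {n : ℕ},
    Cost (BPA.Trans rules) tau p q n → ∀ θ, p = θ ++ ζ → (∀ ρ, q ≠ ρ ++ ζ) →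
    ∃ n₁ n₂, n₁ + n₂ ≤ n ∧ Cost (BPA.Trans rules) tau p ζ n₁ ∧
      Cost (BPA.Trans rules) tau ζ q n₂ := by
  intro p q n c
  induction c with
  | @zero p q hsb =>
    rintro θ rfl hq
    rcases silent_decomp hsb.1 θ ζ rfl with ⟨θ', rfl, _⟩ | ⟨hs2, lift⟩
    · exact absurd rfl (hq θ')
    · have hs1 := lift ζ
      have hst : Br ζ (θ ++ ζ) := br_stutter hsb.2 hs1 hs2
      exact ⟨0, 0, by omega, Cost.zero ⟨hs1, br_symm hst⟩,
        Cost.zero ⟨hs2, br_trans hst hsb.2⟩⟩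
  | @step p p' p'' q n hsb hJ c' ih =>
    rintro θ rfl hq
    rcases silent_decomp hsb.1 θ ζ rfl with ⟨θ', rfl, lift⟩ | ⟨hs2, lift⟩
    · match θ' with
      | [] =>
        refine ⟨0, n + 1, by omega, Cost.zero hsb, ?_⟩
        exact Cost.step ⟨Relation.ReflTransGen.refl, br_refl _⟩ hJ c'
      | Y :: θ₀ =>
        obtain ⟨l, ht⟩ := jstep_trans hJ
        obtain ⟨θ'', rfl, _⟩ := trans_cons_inv ht
        obtain ⟨n₁, n₂, hle, c₁, c₂⟩ := ih θ'' rfl hq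
        exact ⟨n₁ + 1, n₂, by omega, Cost.step hsb hJ c₁, c₂⟩
    · have hs1 := lift ζ
      have hst : Br ζ (θ ++ ζ) := br_stutter hsb.2 hs1 hs2
      refine ⟨0, n + 1, by omega, Cost.zero ⟨hs1, br_symm hst⟩, ?_⟩
      exact Cost.step ⟨hs2, br_trans hst hsb.2⟩ hJ c'

theorem bnorm_def (a : List V) :
    BPA.bnorm rules tau a = sInf {n | Cost (BPA.Trans rules) tau a [] n} := by
  simp [BPA.bnorm, BPA.bnormRel]

theorem bnorm_nonempty (hn : BPA.Normed rules) (a : List V) :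
    {n | Cost (BPA.Trans rules) tau a [] n}.Nonempty :=
  cost_of_reach (reach_nil hn a)

theorem bnorm_cost (hn : BPA.Normed rules) (a : List V) :
    Cost (BPA.Trans rules) tau a [] (BPA.bnorm rules tau a) := by
  rw [bnorm_def]
  exact Nat.sInf_mem (bnorm_nonempty hn a)

theorem bnorm_le {a : List V} {n : ℕ} (c : Cost (BPA.Trans rules) tau a [] n) :
    BPA.bnorm rules tau a ≤ n := by
  rw [bnorm_def]
  exact Nat.sInf_le c

theorem bnorm_mono (hn : BPA.Normed rules) (θ ζ : List V) :
    BPA.bnorm rules tau ζ ≤ BPA.bnorm rules tau (θ ++ ζ) := by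
  match ζ with
  | [] =>
    have : BPA.bnorm rules tau ([] : List V) ≤ 0 :=
      bnorm_le (Cost.zero ⟨Relation.ReflTransGen.refl, br_refl _⟩)
    omega
  | Z :: ζ₀ =>
    obtain ⟨n₁, n₂, hle, _, c₂⟩ := cost_split (bnorm_cost hn (θ ++ (Z :: ζ₀))) θ rfl
      (fun ρ h => by simp at h)
    exact le_trans (bnorm_le c₂) (by omega)

theorem silent_from_nil {x : List V} (h : SStar [] x) : x = [] := by
  rcases Relation.ReflTransGen.cases_head h with rfl | ⟨c, hstep, _⟩
  · rfl
  · exact absurd hstep trans_nil_inv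

theorem silent_to_nil {q : List V} (hr : BPA.Reach rules q []) (h : Br q []) :
    SStar q [] := by
  induction hr using Relation.ReflTransGen.head_induction_on with
  | refl => exact Relation.ReflTransGen.refl
  | head hstep _ ih =>
    obtain ⟨l, ht⟩ := hstep
    rcases br_transfer h ht with ⟨rfl, hb⟩ | ⟨b'', b', hs, ht', _, _⟩
    · exact Relation.ReflTransGen.head ht (ih hb)
    · rw [silent_from_nil hs] at ht'
      exact absurd ht' trans_nil_inv

/-- Cost to termination transfers along branching bisimilarity. -/
theorem cost_transfer (hn : BPA.Normed rules) : ∀ {n : ℕ} {p r q : List V},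
    Cost (BPA.Trans rules) tau p r n → r = [] → Br p q →
    ∃ m ≤ n, Cost (BPA.Trans rules) tau q [] m := by
  intro n p r q c
  induction c generalizing q with
  | @zero p r hsb =>
    rintro rfl hpq
    have hq0 : Br q [] := br_trans (br_symm hpq) hsb.2
    exact ⟨0, le_refl 0, Cost.zero ⟨silent_to_nil (reach_nil hn q) hq0, hq0⟩⟩
  | @step p p' p'' r n hsb hJ c' ih =>
    rintro rfl hpq
    have hp'q : Br p' q := br_trans (br_symm hsb.2) hpq
    rcases hJ with ⟨a, hne, ht⟩ | ⟨ht, hnbr⟩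
    · rcases br_transfer hp'q ht with ⟨hl, _⟩ | ⟨q'', q', hs, ht', hb1, hb2⟩
      · exact absurd hl hne
      · obtain ⟨m, hm, cm⟩ := ih rfl hb2
        refine ⟨m + 1, by omega, Cost.step ⟨hs, br_trans (br_symm hp'q) hb1⟩
          (Or.inl ⟨a, hne, ht'⟩) cm⟩
    · rcases br_transfer hp'q ht with ⟨_, hb⟩ | ⟨q'', q', hs, ht', hb1, hb2⟩
      · obtain ⟨m, hm, cm⟩ := ih rfl hb
        exact ⟨m, by omega, cm⟩
      · have hnb' : ¬ Br q'' q' := fun hc =>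
          hnbr (br_trans (br_trans hb1 hc) (br_symm hb2))
        obtain ⟨m, hm, cm⟩ := ih rfl hb2
        exact ⟨m + 1, by omega, Cost.step ⟨hs, br_trans (br_symm hp'q) hb1⟩
          (Or.inr ⟨ht', hnb'⟩) cm⟩

theorem bnorm_eq_of_br (hn : BPA.Normed rules) {p q : List V} (h : Br p q) :
    BPA.bnorm rules tau p = BPA.bnorm rules tau q := by
  have h1 : ∀ {x y : List V}, Br x y →
      BPA.bnorm rules tau y ≤ BPA.bnorm rules tau x := by
    intro x y hxy
    obtain ⟨m, hm, cm⟩ := cost_transfer hn (bnorm_cost hn x) rfl hxy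
    exact le_trans (bnorm_le cm) hm
  exact le_antisymm (h1 (br_symm h)) (h1 h)

end BPAFacts

section CoreFacts

variable {V : Type*} {A : Type*} {rules : V → A → List V → Prop} {tau : A}

local notation "T" => BPA.Trans rules
local notation "Br" => BrBisim (BPA.Trans rules) tau
local notation "SStar" => SilentStar (BPA.Trans rules) tau
local notation "Rd" => BPA.Rd rules tau

/-- Right congruence: appending a common prefix preserves bisimilarity. -/
theorem br_congr {ζ ζ' : List V} (h : Br ζ ζ') (θ : List V) :
    Br (θ ++ ζ) (θ ++ ζ') := by
  refine ⟨fun p q => (∃ θ', p = θ' ++ ζ ∧ q = θ' ++ ζ') ∨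
    (∃ θ', p = θ' ++ ζ' ∧ q = θ' ++ ζ) ∨ Br p q, ⟨?_, ?_⟩, Or.inl ⟨θ, rfl, rfl⟩⟩
  · rintro p q (⟨θ', rfl, rfl⟩ | ⟨θ', rfl, rfl⟩ | hb)
    · exact Or.inr (Or.inl ⟨θ', rfl, rfl⟩)
    · exact Or.inl ⟨θ', rfl, rfl⟩
    · exact Or.inr (Or.inr (br_symm hb))
  · rintro p q a' l (⟨θ', rfl, rfl⟩ | ⟨θ', rfl, rfl⟩ | hb) ht
    · match θ' with
      | [] =>
        rcases br_transfer h ht with ⟨hl, hb'⟩ | ⟨b'', b', hs, ht', h1, h2⟩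
        · exact Or.inl ⟨hl, Or.inr (Or.inr hb')⟩
        · exact Or.inr ⟨b'', b', hs, ht', Or.inr (Or.inr h1), Or.inr (Or.inr h2)⟩
      | Y :: θ₀ =>
        obtain ⟨θ'', rfl, hsurf⟩ := trans_cons_inv ht
        exact Or.inr ⟨(Y :: θ₀) ++ ζ', θ'' ++ ζ', Relation.ReflTransGen.refl,
          trans_append hsurf, Or.inl ⟨Y :: θ₀, rfl, rfl⟩, Or.inl ⟨θ'', rfl, rfl⟩⟩
    · match θ' with
      | [] =>
        rcases br_transfer (br_symm h) ht with ⟨hl, hb'⟩ | ⟨b'', b', hs, ht', h1, h2⟩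
        · exact Or.inl ⟨hl, Or.inr (Or.inr hb')⟩
        · exact Or.inr ⟨b'', b', hs, ht', Or.inr (Or.inr h1), Or.inr (Or.inr h2)⟩
      | Y :: θ₀ =>
        obtain ⟨θ'', rfl, hsurf⟩ := trans_cons_inv ht
        exact Or.inr ⟨(Y :: θ₀) ++ ζ, θ'' ++ ζ, Relation.ReflTransGen.refl,
          trans_append hsurf, Or.inr (Or.inl ⟨Y :: θ₀, rfl, rfl⟩),
          Or.inr (Or.inl ⟨θ'', rfl, rfl⟩)⟩
    · rcases br_transfer hb ht with ⟨hl, hb'⟩ | ⟨b'', b', hs, ht', h1, h2⟩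
      · exact Or.inl ⟨hl, Or.inr (Or.inr hb')⟩
      · exact Or.inr ⟨b'', b', hs, ht', Or.inr (Or.inr h1), Or.inr (Or.inr h2)⟩

theorem rd_of_br {a a' : List V} (h : Br a a') : Rd a = Rd a' := by
  ext X
  constructor
  · intro hX
    have h1 : Br (X :: a') (X :: a) := br_congr (br_symm h) [X]
    exact br_trans (br_trans h1 hX) h
  · intro hX
    have h1 : Br (X :: a) (X :: a') := br_congr h [X]
    exact br_trans (br_trans h1 hX) (br_symm h)

/-- Decomposition: if `Y δ γ ≃ γ` then already `Y δ γ ≃ δ γ`. -/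
theorem br_dec (hn : BPA.Normed rules) {Y : V} {δ γ : List V}
    (h : Br (Y :: (δ ++ γ)) γ) : Br (Y :: (δ ++ γ)) (δ ++ γ) := by
  match hδγ : δ ++ γ with
  | [] =>
    have hγ : γ = [] := by
      cases δ <;> simp_all
    rw [hδγ, hγ] at h; exact h
  | Z :: ρ₀ =>
    rw [hδγ] at h
    have hne : ∀ ρ : List V, ([] : List V) ≠ ρ ++ (Z :: ρ₀) := by
      intro ρ hc; simp at hc
    obtain ⟨n₁, n₂, hle, c₁, c₂⟩ :=
      cost_split (bnorm_cost (tau := tau) hn (Y :: (Z :: ρ₀))) [Y] rfl hne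
    have hbγ : BPA.bnorm rules tau (Y :: (Z :: ρ₀)) = BPA.bnorm rules tau γ :=
      bnorm_eq_of_br hn h
    have hmono : BPA.bnorm rules tau γ ≤ BPA.bnorm rules tau (Z :: ρ₀) := by
      have := bnorm_mono (tau := tau) hn δ γ
      rwa [hδγ] at this
    have hb2 : BPA.bnorm rules tau (Z :: ρ₀) ≤ n₂ := bnorm_le c₂
    have hn1 : n₁ = 0 := by omega
    subst hn1
    cases c₁ with
    | zero hsb => exact hsb.2

/-- Absorption transfer: redundancy of a string depends only on Rd of the tail. -/
theorem br_abs (hn : BPA.Normed rules) {γ γ' : List V} (hrd : Rd γ = Rd γ') :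
    ∀ β : List V, Br (β ++ γ) γ → Br (β ++ γ') γ' := by
  intro β
  induction β with
  | nil => intro _; exact br_refl γ'
  | cons Y β₀ ih =>
    intro h
    have hdec : Br (Y :: (β₀ ++ γ)) (β₀ ++ γ) := br_dec hn h
    have htail : Br (β₀ ++ γ) γ := br_trans (br_symm hdec) h
    have hY : Y ∈ Rd (β₀ ++ γ) := hdec
    have hYγ' : Y ∈ Rd γ' := by
      rw [rd_of_br htail, hrd] at hY; exact hY
    have hIH := ih htail
    have h1 : Br (Y :: (β₀ ++ γ')) (Y :: γ') := br_congr hIH [Y]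
    exact br_trans h1 hYγ'

/-- The key transfer lemma: relative equivalence depends only on Rd of the tail. -/
theorem br_star (hn : BPA.Normed rules) {γ γ' : List V} (hrd : Rd γ = Rd γ')
    {ξ η : List V} (h : Br (ξ ++ γ) (η ++ γ)) : Br (ξ ++ γ') (η ++ γ') := by
  classical
  refine ⟨fun p q => (∃ ξ₁ η₁, p = ξ₁ ++ γ' ∧ q = η₁ ++ γ' ∧ Br (ξ₁ ++ γ) (η₁ ++ γ)) ∨
    Br p q, ⟨?_, ?_⟩, Or.inl ⟨ξ, η, rfl, rfl, h⟩⟩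
  · rintro p q (⟨ξ₁, η₁, rfl, rfl, hb⟩ | hb)
    · exact Or.inl ⟨η₁, ξ₁, rfl, rfl, br_symm hb⟩
    · exact Or.inr (br_symm hb)
  · rintro p q a' l (⟨ξ₁, η₁, rfl, rfl, hb⟩ | hb) ht
    swap
    · rcases br_transfer hb ht with ⟨hl, hb'⟩ | ⟨b'', b', hs, ht', hb1, hb2⟩
      · exact Or.inl ⟨hl, Or.inr hb'⟩
      · exact Or.inr ⟨b'', b', hs, ht', Or.inr hb1, Or.inr hb2⟩
    -- pair ξ₁γ' vs η₁γ'
    · by_cases habs : Br (ξ₁ ++ γ) γ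
      · -- both sides absorbable: defer to genuine bisimilarity over γ'
        have h2 : Br (η₁ ++ γ) γ := br_trans (br_symm hb) habs
        have hb' : Br (ξ₁ ++ γ') (η₁ ++ γ') :=
          br_trans (br_abs hn hrd ξ₁ habs) (br_symm (br_abs hn hrd η₁ h2))
        rcases br_transfer hb' ht with ⟨hl, hb''⟩ | ⟨b'', b', hs, ht', hb1, hb2⟩
        · exact Or.inl ⟨hl, Or.inr hb''⟩
        · exact Or.inr ⟨b'', b', hs, ht', Or.inr hb1, Or.inr hb2⟩
      · match ξ₁ with
        | [] => exact absurd (br_refl _) (by simpa using habs)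
        | X :: ξ₀ =>
          obtain ⟨θ', rfl, hsurf⟩ := trans_cons_inv ht
          have htγ : T ((X :: ξ₀) ++ γ) l (θ' ++ γ) := trans_append hsurf
          rcases br_transfer hb htγ with ⟨hl, hb'⟩ | ⟨m, m', hs, ht', hb1, hb2⟩
          · exact Or.inl ⟨hl, Or.inl ⟨θ', η₁, rfl, rfl, hb'⟩⟩
          · rcases silent_decomp hs η₁ γ rfl with ⟨η₂, rfl, lift⟩ | ⟨hs2, lift⟩
            · match η₂ with
              | [] =>
                exact absurd (br_trans hb1 (by simpa using br_refl γ)) habs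
              | Z :: η₀ =>
                obtain ⟨η₃, rfl, hsurf'⟩ := trans_cons_inv ht'
                refine Or.inr ⟨(Z :: η₀) ++ γ', η₃ ++ γ', lift γ',
                  trans_append hsurf', Or.inl ⟨X :: ξ₀, Z :: η₀, rfl, rfl, hb1⟩,
                  Or.inl ⟨θ', η₃, rfl, rfl, hb2⟩⟩
            · -- the matching dipped into γ: both sides are absorbable, contradiction
              have hbm : Br (η₁ ++ γ) m := br_trans (br_symm hb) hb1
              have hst : Br γ (η₁ ++ γ) := br_stutter hbm (lift γ) hs2
              exact absurd (br_trans hb (br_symm hst)) habs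

/-- Rd of an extension depends only on Rd of the tail. -/
theorem rd_congr (hn : BPA.Normed rules) {γ γ' : List V} (hrd : Rd γ = Rd γ')
    (δ : List V) : Rd (δ ++ γ) = Rd (δ ++ γ') := by
  ext X
  constructor
  · intro hX
    have : Br ((X :: δ) ++ γ) (δ ++ γ) := hX
    exact br_star hn hrd this
  · intro hX
    have : Br ((X :: δ) ++ γ') (δ ++ γ') := hX
    exact br_star hn hrd.symm this

end CoreFacts

/-- Concatenation δ_{l-1} ++ ... ++ δ_i of pushed strings along a path. -/
def catδ {V : Type*} (δ : ℕ → List V) (i : ℕ) : ℕ → List V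
  | 0 => []
  | l + 1 => if i ≤ l then δ l ++ catδ δ i l else []

/-- Iterated prepending of a fixed cycle string. -/
def itApp {V : Type*} (C z : List V) : ℕ → List V
  | 0 => z
  | n + 1 => C ++ itApp C z n

theorem catδ_le {V : Type*} (δ : ℕ → List V) {i l : ℕ} (h : l ≤ i) :
    catδ δ i l = [] := by
  match l with
  | 0 => rfl
  | l + 1 => exact if_neg (by omega)

theorem catδ_succ {V : Type*} (δ : ℕ → List V) {i l : ℕ} (h : i ≤ l) :
    catδ δ i (l + 1) = δ l ++ catδ δ i l := if_pos h

theorem catδ_suffix {V : Type*} (δ : ℕ → List V) {i l m : ℕ} (hil : i ≤ l)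
    (hlm : l ≤ m) : ∃ P, catδ δ i m = P ++ catδ δ i l := by
  induction m, hlm using Nat.le_induction with
  | base => exact ⟨[], rfl⟩
  | succ m hm ih =>
    obtain ⟨P, hP⟩ := ih
    exact ⟨δ m ++ P, by rw [catδ_succ δ (le_trans hil hm), hP, List.append_assoc]⟩

section Pump

variable {V : Type*} {A : Type*} {rules : V → A → List V → Prop} {tau : A}

local notation "T" => BPA.Trans rules
local notation "Br" => BrBisim (BPA.Trans rules) tau
local notation "SStar" => SilentStar (BPA.Trans rules) tau
local notation "Rd" => BPA.Rd rules tau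

theorem walk (hn : BPA.Normed rules) {k : ℕ} (Xs : ℕ → V) (Rs : ℕ → Set V)
    (a : ℕ → A) (σ δ γ : ℕ → List V)
    (hmain : ∀ l, l < k → rules (Xs l) (a l) (σ l ++ Xs (l + 1) :: δ l) ∧
      Rd (γ l) = Rs l ∧ Rd (δ l ++ γ l) = Rs (l + 1))
    (b : ℕ) (ζ : List V) (hζ : Rd ζ = Rs b) :
    ∀ l, b ≤ l → l ≤ k → Rd (catδ δ b l ++ ζ) = Rs l ∧
      BPA.Reach rules (Xs b :: ζ) (Xs l :: (catδ δ b l ++ ζ)) := by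
  intro l hbl
  induction l, hbl using Nat.le_induction with
  | base =>
    intro _
    rw [catδ_le δ (le_refl b)]
    exact ⟨hζ, Relation.ReflTransGen.refl⟩
  | succ l hbl ih =>
    intro hlk
    obtain ⟨hRdl, hRe⟩ := ih (by omega)
    obtain ⟨hrule, hγl, hδγl⟩ := hmain l (by omega)
    have hrd : Rd (catδ δ b (l + 1) ++ ζ) = Rs (l + 1) := by
      rw [catδ_succ δ hbl, List.append_assoc]
      rw [rd_congr hn (hRdl.trans hγl.symm) (δ l)]
      exact hδγl
    refine ⟨hrd, ?_⟩
    have hstep : T (Xs l :: (catδ δ b l ++ ζ)) (a l)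
        ((σ l ++ Xs (l + 1) :: δ l) ++ (catδ δ b l ++ ζ)) :=
      ⟨Xs l, σ l ++ Xs (l + 1) :: δ l, catδ δ b l ++ ζ, rfl, hrule, rfl⟩
    have heq : (σ l ++ Xs (l + 1) :: δ l) ++ (catδ δ b l ++ ζ) =
        σ l ++ (Xs (l + 1) :: (δ l ++ (catδ δ b l ++ ζ))) := by
      simp [List.append_assoc]
    have hreach2 : BPA.Reach rules ((σ l ++ Xs (l + 1) :: δ l) ++ (catδ δ b l ++ ζ))
        (Xs (l + 1) :: (δ l ++ (catδ δ b l ++ ζ))) := by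
      rw [heq]
      exact reach_suffix hn (σ l) _
    have heq2 : Xs (l + 1) :: (δ l ++ (catδ δ b l ++ ζ)) =
        Xs (l + 1) :: (catδ δ b (l + 1) ++ ζ) := by
      rw [catδ_succ δ hbl, List.append_assoc]
    rw [← heq2]
    exact Relation.ReflTransGen.trans (hRe.tail ⟨a l, hstep⟩) hreach2

theorem pump (hn : BPA.Normed rules) {k i h : ℕ} (hih : i ≤ h) (hhk : h < k)
    (Xs : ℕ → V) (Rs : ℕ → Set V) (a : ℕ → A) (σ δ γ : ℕ → List V)
    (hmain : ∀ l, l < k → rules (Xs l) (a l) (σ l ++ Xs (l + 1) :: δ l) ∧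
      Rd (γ l) = Rs l ∧ Rd (δ l ++ γ l) = Rs (l + 1))
    (hpos : 0 < BPA.bnormRel rules tau (δ h) (γ h))
    (hXik : Xs k = Xs i) (hRik : Rs k = Rs i)
    (ζ0 : List V) (hζ0 : Rd ζ0 = Rs i) :
    ∀ m : ℕ, ∃ β : List V, BPA.Reach rules (Xs i :: ζ0) β ∧
      m ≤ BPA.bnorm rules tau β := by
  classical
  have hγh : Rd (γ h) = Rs h := (hmain h hhk).2.1
  -- δ h is nonempty
  have hδh : δ h ≠ [] := by
    intro e
    have c0 : Cost (BPA.Trans rules) tau (δ h ++ γ h) (γ h) 0 := by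
      rw [e]
      exact Cost.zero ⟨Relation.ReflTransGen.refl, br_refl _⟩
    have : BPA.bnormRel rules tau (δ h) (γ h) ≤ 0 := Nat.sInf_le c0
    omega
  -- the crucial non-absorption property of one turn around the cycle
  have hN : ∀ ζ, Rd ζ = Rs i →
      ¬ SBStar (BPA.Trans rules) tau (catδ δ i k ++ ζ) ζ := by
    rintro ζ hζ ⟨spath, sbr⟩
    obtain ⟨P, hP⟩ := catδ_suffix δ (by omega : i ≤ h + 1) (by omega : h + 1 ≤ k)
    rw [catδ_succ δ hih] at hP
    set w : List V := catδ δ i h ++ ζ with hw_def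
    have hw : Rd w = Rd (γ h) := by
      rw [(walk hn Xs Rs a σ δ γ hmain i ζ hζ h hih (by omega)).1, hγh]
    have hsplit : catδ δ i k ++ ζ = P ++ (δ h ++ w) := by
      rw [hP, hw_def]
      simp [List.append_assoc]
    rw [hsplit] at spath sbr
    rcases silent_decomp spath P (δ h ++ w) rfl with ⟨θ', hζeq, _⟩ | ⟨s2, lift⟩
    · -- impossible by lengths
      have : (δ h).length ≠ 0 := fun e => hδh (List.length_eq_zero_iff.mp e)
      have hlen := congrArg List.length hζeq
      simp [hw_def] at hlen
      omega
    have L2 : SStar (P ++ (δ h ++ w)) (δ h ++ w) := lift (δ h ++ w)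
    have key : SStar (δ h ++ γ h) (γ h) ∧ SStar (δ h ++ w) w ∧ SStar w ζ := by
      rcases silent_decomp s2 (δ h) w rfl with ⟨θ', hζeq2, lift2⟩ | ⟨s3, lift2⟩
      · have hlen := congrArg List.length hζeq2
        simp [hw_def] at hlen
        have hθ' : θ' = [] := List.length_eq_zero_iff.mp (by omega)
        have hcat : (catδ δ i h).length = 0 := by omega
        have hcat' : catδ δ i h = [] := List.length_eq_zero_iff.mp hcat
        have hwζ : w = ζ := by rw [hw_def, hcat']; rfl
        subst hθ'
        refine ⟨lift2 (γ h), ?_, ?_⟩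
        · have := lift2 w; simpa using this
        · rw [hwζ]
          exact Relation.ReflTransGen.refl
      · exact ⟨lift2 (γ h), lift2 w, s3⟩
    obtain ⟨sδγ, s_pw, s3⟩ := key
    have b₁ : Br (δ h ++ w) (P ++ (δ h ++ w)) := br_stutter sbr L2 s2
    have b₂ : Br w (P ++ (δ h ++ w)) := br_stutter sbr (L2.trans s_pw) s3
    have bδ : Br (δ h ++ w) w := br_trans b₁ (br_symm b₂)
    have bδ' : Br (δ h ++ γ h) (γ h) := by
      have := br_star hn hw (ξ := δ h) (η := []) (by simpa using bδ)
      simpa using this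
    have c0 : Cost (BPA.Trans rules) tau (δ h ++ γ h) (γ h) 0 :=
      Cost.zero ⟨sδγ, bδ'⟩
    have : BPA.bnormRel rules tau (δ h) (γ h) ≤ 0 := Nat.sInf_le c0
    omega
  -- one turn around the cycle increases the branching norm
  have hkey : ∀ ζ, Rd ζ = Rs i →
      BPA.bnorm rules tau ζ + 1 ≤ BPA.bnorm rules tau (catδ δ i k ++ ζ) := by
    intro ζ hζ
    match hζe : ζ with
    | [] =>
      have h0 : BPA.bnorm rules tau ([] : List V) = 0 :=
        Nat.le_zero.mp (bnorm_le (Cost.zero ⟨Relation.ReflTransGen.refl, br_refl _⟩))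
      rw [h0]
      rcases Nat.eq_zero_or_pos (BPA.bnorm rules tau (catδ δ i k ++ ([] : List V))) with he | hp
      · exfalso
        have c := bnorm_cost (tau := tau) hn (catδ δ i k ++ ([] : List V))
        rw [he] at c
        cases c with
        | zero hsb => exact hN [] hζ hsb
      · omega
    | Z :: ζ₀ =>
      obtain ⟨n₁, n₂, hle, c₁, c₂⟩ :=
        cost_split (bnorm_cost (tau := tau) hn (catδ δ i k ++ (Z :: ζ₀)))
          (catδ δ i k) rfl (fun ρ hc => by simp at hc)
      have hb2 : BPA.bnorm rules tau (Z :: ζ₀) ≤ n₂ := bnorm_le c₂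
      have hn1 : n₁ ≠ 0 := by
        intro e
        subst e
        cases c₁ with
        | zero hsb => exact hN (Z :: ζ₀) hζ hsb
      omega
  -- iterate
  have hRdz : ∀ n, Rd (itApp (catδ δ i k) ζ0 n) = Rs i := by
    intro n
    induction n with
    | zero => exact hζ0
    | succ n ih =>
      have := (walk hn Xs Rs a σ δ γ hmain i (itApp (catδ δ i k) ζ0 n) ih k
        (hih.trans (le_of_lt hhk)) (le_refl k)).1
      rw [← hRik]
      exact this
  have hreachz : ∀ n, BPA.Reach rules (Xs i :: ζ0) (Xs i :: itApp (catδ δ i k) ζ0 n) := by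
    intro n
    induction n with
    | zero => exact Relation.ReflTransGen.refl
    | succ n ih =>
      have hstep := (walk hn Xs Rs a σ δ γ hmain i (itApp (catδ δ i k) ζ0 n)
        (hRdz n) k (hih.trans (le_of_lt hhk)) (le_refl k)).2
      rw [hXik] at hstep
      exact ih.trans hstep
  have hlow : ∀ n, n ≤ BPA.bnorm rules tau (itApp (catδ δ i k) ζ0 n) := by
    intro n
    induction n with
    | zero => omega
    | succ n ih =>
      have := hkey (itApp (catδ δ i k) ζ0 n) (hRdz n)
      calc n + 1 ≤ BPA.bnorm rules tau (itApp (catδ δ i k) ζ0 n) + 1 := by omega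
        _ ≤ _ := this
  intro m
  exact ⟨Xs i :: itApp (catδ δ i k) ζ0 m, hreachz m,
    le_trans (hlow m) (bnorm_mono hn [Xs i] _)⟩

end Pump

section SumFacts

variable {V : Type*} {A : Type} {rules : V → A → List V → Prop} {tau : A}
variable {St : Type} {t : St → A → St → Prop}

theorem sum_inl_inv {p : List V} {l : A} {x : List V ⊕ St}
    (h : SumTrans (BPA.Trans rules) t (Sum.inl p) l x) :
    ∃ q, x = Sum.inl q ∧ BPA.Trans rules p l q := by
  cases x with
  | inl q => exact ⟨q, rfl, h⟩
  | inr q => exact h.elim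

theorem sum_inr_inv {p : St} {l : A} {x : List V ⊕ St}
    (h : SumTrans (BPA.Trans rules) t (Sum.inr p) l x) :
    ∃ q, x = Sum.inr q ∧ t p l q := by
  cases x with
  | inl q => exact h.elim
  | inr q => exact ⟨q, rfl, h⟩

theorem silent_inl {s x : List V ⊕ St}
    (h : SilentStar (SumTrans (BPA.Trans rules) t) tau s x) :
    ∀ p, s = Sum.inl p → ∃ q, x = Sum.inl q ∧
      SilentStar (BPA.Trans rules) tau p q := by
  induction h using Relation.ReflTransGen.head_induction_on with
  | refl => exact fun p hp => ⟨p, hp.symm ▸ rfl, Relation.ReflTransGen.refl⟩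
  | head hstep _ ih =>
    rintro p rfl
    obtain ⟨p₁, rfl, ht⟩ := sum_inl_inv hstep
    obtain ⟨q, rfl, hs⟩ := ih p₁ rfl
    exact ⟨q, rfl, Relation.ReflTransGen.head ht hs⟩

theorem silent_inr {s x : List V ⊕ St}
    (h : SilentStar (SumTrans (BPA.Trans rules) t) tau s x) :
    ∀ p, s = Sum.inr p → ∃ q, x = Sum.inr q ∧ SilentStar t tau p q := by
  induction h using Relation.ReflTransGen.head_induction_on with
  | refl => exact fun p hp => ⟨p, hp.symm ▸ rfl, Relation.ReflTransGen.refl⟩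
  | head hstep _ ih =>
    rintro p rfl
    obtain ⟨p₁, rfl, ht⟩ := sum_inr_inv hstep
    obtain ⟨q, rfl, hs⟩ := ih p₁ rfl
    exact ⟨q, rfl, Relation.ReflTransGen.head ht hs⟩

theorem br_inl_inl {p q : List V}
    (h : BrBisim (SumTrans (BPA.Trans rules) t) tau (Sum.inl p) (Sum.inl q)) :
    BrBisim (BPA.Trans rules) tau p q := by
  refine ⟨fun x y => BrBisim (SumTrans (BPA.Trans rules) t) tau (Sum.inl x) (Sum.inl y),
    ⟨fun x y hxy => br_symm hxy, ?_⟩, h⟩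
  intro x y x' l hxy ht
  have ht' : SumTrans (BPA.Trans rules) t (Sum.inl x) l (Sum.inl x') := ht
  rcases br_transfer hxy ht' with ⟨hl, hb⟩ | ⟨b'', b', hs, htb, h1, h2⟩
  · exact Or.inl ⟨hl, hb⟩
  · obtain ⟨q'', rfl, hs'⟩ := silent_inl hs y rfl
    obtain ⟨q', rfl, htq⟩ := sum_inl_inv htb
    exact Or.inr ⟨q'', q', hs', htq, h1, h2⟩

theorem reach_match {p0 β : List V} {s : St}
    (hb : BrBisim (SumTrans (BPA.Trans rules) t) tau (Sum.inl p0) (Sum.inr s))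
    (hr : BPA.Reach rules p0 β) :
    ∃ q, Relation.ReflTransGen (fun p q => ∃ l, t p l q) s q ∧
      BrBisim (SumTrans (BPA.Trans rules) t) tau (Sum.inl β) (Sum.inr q) := by
  induction hr with
  | refl => exact ⟨s, Relation.ReflTransGen.refl, hb⟩
  | tail _ hstep ih =>
    obtain ⟨q, hq, hbq⟩ := ih
    obtain ⟨l, ht⟩ := hstep
    have ht' : SumTrans (BPA.Trans rules) t (Sum.inl _) l (Sum.inl _) := ht
    rcases br_transfer hbq ht' with ⟨_, hb'⟩ | ⟨b'', b', hs, htb, _, h2⟩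
    · exact ⟨q, hq, hb'⟩
    · obtain ⟨q₁, rfl, hs'⟩ := silent_inr hs q rfl
      obtain ⟨q₂, rfl, htq⟩ := sum_inr_inv htb
      refine ⟨q₂, ?_, h2⟩
      exact (hq.trans (Relation.ReflTransGen.mono (fun a b hab => ⟨tau, hab⟩) _ _ hs')).tail ⟨l, htq⟩

end SumFacts

/-- A witness path in G(Δ) certifies irregularity: the process X₀α reaches
processes of unbounded branching norm, hence is not regular w.r.t. branching
bisimilarity. -/
theorem witness_path_not_regular {V : Type*} {A : Type}
    (rules : V → A → List V → Prop) (tau : A) (hn : BPA.Normed rules)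
    (X₀ : V) (α : List V) (k : ℕ) (Xs : ℕ → V) (Rs : ℕ → Set V) (u : ℕ → ℕ)
    (hX0 : Xs 0 = X₀) (hR0 : Rs 0 = BPA.Rd rules tau α)
    (hreal : ∀ l ≤ k, BPA.Realizable rules tau (Rs l))
    (hedge : ∀ l < k, BPA.GEdge rules tau (Xs l) (Rs l) (Xs (l + 1)) (Rs (l + 1)))
    (hw : ∀ l < k, u l ≤ 1 ∧
      (u l = 1 ↔ BPA.GHeavy rules tau (Xs l) (Rs l) (Xs (l + 1)) (Rs (l + 1))))
    (hwitness : ∃ i < k, Xs i = Xs k ∧ Rs i = Rs k ∧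
      0 < ∑ l ∈ Finset.Ico i k, u l) :
    (∀ m : ℕ, 0 < m → ∃ β : List V,
        BPA.Reach rules (X₀ :: α) β ∧ m ≤ BPA.bnorm rules tau β) ∧
    ¬ BPA.RegularBr rules tau (X₀ :: α) := by
  classical
  obtain ⟨i, hik, hXik, hRik, hsum⟩ := hwitness
  -- extract a heavy edge along the cycle
  have hex : ∃ h ∈ Finset.Ico i k, u h ≠ 0 := by
    by_contra hc
    push_neg at hc
    rw [Finset.sum_eq_zero hc] at hsum
    omega
  obtain ⟨h, hmem, hune⟩ := hex
  rw [Finset.mem_Ico] at hmem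
  have hhk : h < k := hmem.2
  have hheavy : BPA.GHeavy rules tau (Xs h) (Rs h) (Xs (h + 1)) (Rs (h + 1)) := by
    have h1 := hw h hhk
    exact h1.2.mp (by omega)
  -- choose edge data, using the heavy witness at index h
  have hdata : ∀ l, ∃ (al : A) (σl δl γl : List V),
      (l < k → rules (Xs l) al (σl ++ Xs (l + 1) :: δl) ∧
        BPA.Rd rules tau γl = Rs l ∧ BPA.Rd rules tau (δl ++ γl) = Rs (l + 1)) ∧
      (l = h → 0 < BPA.bnormRel rules tau δl γl) := by
    intro l
    by_cases hl : l = h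
    · subst hl
      obtain ⟨al, σl, δl, γl, h1, h2, h3, h4⟩ := hheavy
      exact ⟨al, σl, δl, γl, fun _ => ⟨h1, h2, h3⟩, fun _ => h4⟩
    · by_cases hlk : l < k
      · obtain ⟨al, σl, δl, γl, h1, h2, h3⟩ := hedge l hlk
        exact ⟨al, σl, δl, γl, fun _ => ⟨h1, h2, h3⟩, fun he => absurd he hl⟩
      · exact ⟨tau, [], [], [], fun hc => absurd hc hlk, fun he => absurd he hl⟩
  choose a σf δf γf hmain hposf using hdata
  have hpos := hposf h rfl
  -- walk from X₀ α to the entry of the cycle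
  obtain ⟨hRdi, hRei⟩ := walk hn Xs Rs a σf δf γf hmain 0 α hR0.symm i
    (Nat.zero_le i) (le_of_lt hik)
  rw [hX0] at hRei
  have P1' := pump hn hmem.1 hhk Xs Rs a σf δf γf hmain hpos hXik.symm hRik.symm
    (catδ δf 0 i ++ α) hRdi
  have P1 : ∀ m : ℕ, ∃ β : List V, BPA.Reach rules (X₀ :: α) β ∧
      m ≤ BPA.bnorm rules tau β := by
    intro m
    obtain ⟨β, hr, hb⟩ := P1' m
    exact ⟨β, hRei.trans hr, hb⟩
  refine ⟨fun m _ => P1 m, ?_⟩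
  rintro ⟨St, t, s, hfin, hbis⟩
  choose β hβr hβn using P1
  have hq : ∀ m : ℕ, ∃ q, Relation.ReflTransGen (fun p q => ∃ l, t p l q) s q ∧
      BrBisim (SumTrans (BPA.Trans rules) t) tau (Sum.inl (β m)) (Sum.inr q) :=
    fun m => reach_match hbis (hβr m)
  choose qf hqr hqb using hq
  haveI : Finite ↥{q | Relation.ReflTransGen (fun p q => ∃ l, t p l q) s q} :=
    hfin.to_subtype
  obtain ⟨y, hy⟩ := Finite.exists_infinite_fiber
    (fun m : ℕ => (⟨qf m, hqr m⟩ : {q | Relation.ReflTransGen (fun p q => ∃ l, t p l q) s q}))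
  rw [Set.infinite_coe_iff] at hy
  obtain ⟨m₁, hm₁⟩ := hy.nonempty
  obtain ⟨m₂, hm₂, hgt⟩ := hy.exists_gt (BPA.bnorm rules tau (β m₁))
  have heq : qf m₁ = qf m₂ := by
    have e1 : (⟨qf m₁, hqr m₁⟩ : {q | Relation.ReflTransGen (fun p q => ∃ l, t p l q) s q}) = y := hm₁
    have e2 : (⟨qf m₂, hqr m₂⟩ : {q | Relation.ReflTransGen (fun p q => ∃ l, t p l q) s q}) = y := hm₂
    have := e1.trans e2.symm
    exact congrArg Subtype.val this
  have hbb : BrBisim (SumTrans (BPA.Trans rules) t) tau (Sum.inl (β m₁))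
      (Sum.inl (β m₂)) := by
    refine br_trans (hqb m₁) ?_
    rw [heq]
    exact br_symm (hqb m₂)
  have hb12 := br_inl_inl hbb
  have hbe := bnorm_eq_of_br hn hb12
  have hb2 := hβn m₂
  omega
end
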